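/- arXiv:1912.03943 — 3 statements merged into one kernel-verified Lean document; each statement's English description precedes it below -/
import Mathlib

section
/- Let A be a ℤ₂-graded associative conformal algebra and let B be a parity-graded H-submodule of A that generates A and is closed under the commutator λ-bracket, i.e., [a_λ b] = (a_λ b) − (−1)^{|a||b|}(b_{−∂−λ} a) satisfies [B_λ B] ⊆ B[λ]. Define the filtration A₁ = B and A_{n+1} = the H-submodule generated by all λ-coefficients of polynomials (b_λ u) with b ∈ B, u ∈ A_n. Then for all n, m ≥ 1: (A_n _λ A_m) ⊆ A_{n+m}[λ] and [A_n _λ A_m] ⊆ A_{n+m−1}[λ]. -/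
open Finsupp

noncomputable section

variable (k : Type) [Field k] [CharZero k]

section Base

variable {M N : Type} [AddCommGroup M] [Module k M] [AddCommGroup N] [Module k N]

/-- Multiplication by `λ` on `M[λ] := ℕ →₀ M`. -/
def lamMul : (ℕ →₀ M) →ₗ[k] (ℕ →₀ M) := Finsupp.lmapDomain M k Nat.succ

/-- Apply a linear map to every coefficient of a polynomial. -/
def cw (f : M →ₗ[k] N) : (ℕ →₀ M) →ₗ[k] (ℕ →₀ N) := Finsupp.mapRange.linearMap f

/-- The constant-polynomial embedding `M → M[λ]`. -/
def cst : M →ₗ[k] (ℕ →₀ M) := Finsupp.lsingle 0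

/-- Multiplication by `λ` on `M[λ,μ] := ℕ →₀ (ℕ →₀ M)` (outer variable `μ`, inner `λ`). -/
def lamMul2 : (ℕ →₀ (ℕ →₀ M)) →ₗ[k] (ℕ →₀ (ℕ →₀ M)) := cw k (lamMul k)

/-- Multiplication by `μ` on `M[λ,μ]`. -/
def muMul2 : (ℕ →₀ (ℕ →₀ M)) →ₗ[k] (ℕ →₀ (ℕ →₀ M)) := Finsupp.lmapDomain (ℕ →₀ M) k Nat.succ

/-- The constant embedding `M → M[λ,μ]`. -/
def cst2 : M →ₗ[k] (ℕ →₀ (ℕ →₀ M)) := (cst k).comp (cst k)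

/-- Interchange of the two variables of `M[λ,μ]`. -/
def swapVar : (ℕ →₀ (ℕ →₀ M)) →ₗ[k] (ℕ →₀ (ℕ →₀ M)) :=
  Finsupp.lsum k fun n => cw k (Finsupp.lsingle n)

/-- The substitution `λ ↦ -∂-λ` on `M[λ]`, where `∂` acts on `M` via `D`. -/
def substNeg (D : M →ₗ[k] M) : (ℕ →₀ M) →ₗ[k] (ℕ →₀ M) :=
  Finsupp.lsum k fun n => ((-(cw k D) - lamMul k) ^ n) ∘ₗ cst k

/-- The substitution `ν ↦ λ+μ` from `M[ν]` to `M[λ,μ]`. -/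
def substAdd : (ℕ →₀ M) →ₗ[k] (ℕ →₀ (ℕ →₀ M)) :=
  Finsupp.lsum k fun n => ((lamMul2 k + muMul2 k) ^ n) ∘ₗ cst2 k

end Base
section Ops

variable {A B C V W L P : Type} [AddCommGroup A] [Module k A] [AddCommGroup B] [Module k B]
  [AddCommGroup C] [Module k C] [AddCommGroup V] [Module k V] [AddCommGroup W] [Module k W]
  [AddCommGroup L] [Module k L] [AddCommGroup P] [Module k P]

/-- `P_λ(a, Q_μ(b, c))`, an element of `W[λ,μ]` (outer variable `μ`, inner `λ`). -/
def opComp (F : A →ₗ[k] C →ₗ[k] (ℕ →₀ W)) (G : B →ₗ[k] V →ₗ[k] (ℕ →₀ C))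
    (a : A) (b : B) (c : V) : ℕ →₀ (ℕ →₀ W) := cw k (F a) (G b c)

/-- `Q_μ(b, P_λ(a, c))`, an element of `W[λ,μ]` (outer variable `μ`, inner `λ`). -/
def opCompSwap (F : B →ₗ[k] C →ₗ[k] (ℕ →₀ W)) (G : A →ₗ[k] V →ₗ[k] (ℕ →₀ C))
    (b : B) (a : A) (c : V) : ℕ →₀ (ℕ →₀ W) := swapVar k (cw k (F b) (G a c))

/-- `Q_{λ+μ}(P_λ(a, b), c)`, an element of `W[λ,μ]` (outer variable `μ`, inner `λ`). -/
def opSubst (F : A →ₗ[k] B →ₗ[k] (ℕ →₀ C)) (G : C →ₗ[k] V →ₗ[k] (ℕ →₀ W))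
    (a : A) (b : B) (c : V) : ℕ →₀ (ℕ →₀ W) :=
  Finsupp.lsum k (fun n => ((lamMul2 k (M := W)) ^ n) ∘ₗ substAdd k) (cw k (G.flip c) (F a b))

end Ops

/-- The Koszul sign `(-1)^{|a||b|}` attached to parities `i`, `j`. -/
def sgn (i j : ZMod 2) : ℤ := if i = 1 ∧ j = 1 then -1 else 1

section Structures

variable {A B C L V P : Type} [AddCommGroup A] [Module k A] [AddCommGroup B] [Module k B]
  [AddCommGroup C] [Module k C]
  [AddCommGroup L] [Module k L] [AddCommGroup V] [Module k V] [AddCommGroup P] [Module k P]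

/-- A `ℤ₂`-graded module over `H = k[∂]`, where `∂` acts via `D`:
the two graded components are complementary and `∂`-invariant. -/
structure IsGradedHMod (D : L →ₗ[k] L) (par : ZMod 2 → Submodule k L) : Prop where
  sup_eq_top : par 0 ⊔ par 1 = ⊤
  inf_eq_bot : par 0 ⊓ par 1 = ⊥
  map_d : ∀ i a, a ∈ par i → D a ∈ par i

/-- Sesqui-linearity of a pairing `A ⊗ B → C[λ]` with respect to the `∂`-actions
`DA`, `DB`, `DC`: `F(∂a, b) = -λ F(a,b)` and `F(a, ∂b) = (∂+λ) F(a,b)`. -/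
structure IsSesqui (DA : A →ₗ[k] A) (DB : B →ₗ[k] B) (DC : C →ₗ[k] C)
    (F : A →ₗ[k] B →ₗ[k] (ℕ →₀ C)) : Prop where
  dleft : ∀ a b, F (DA a) b = -(lamMul k (F a b))
  dright : ∀ a b, F a (DB b) = cw k DC (F a b) + lamMul k (F a b)

/-- A Lie conformal superalgebra structure on the `H`-module `L` (with `∂` acting via `D`)
with `ℤ₂`-grading `par` and `λ`-bracket `Br`. -/
structure IsLieConfSuper (D : L →ₗ[k] L) (par : ZMod 2 → Submodule k L)
    (Br : L →ₗ[k] L →ₗ[k] (ℕ →₀ L)) : Prop where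
  graded : IsGradedHMod k D par
  sesqui : IsSesqui k D D D Br
  parity : ∀ i j a b, a ∈ par i → b ∈ par j → ∀ n, Br a b n ∈ par (i + j)
  skew : ∀ i j a b, a ∈ par i → b ∈ par j → Br a b = -(sgn i j • substNeg k D (Br b a))
  jacobi : ∀ i j a b c, a ∈ par i → b ∈ par j →
    opComp k Br Br a b c = opSubst k Br Br a b c + sgn i j • opCompSwap k Br Br b a c

/-- A Poisson conformal superalgebra structure on the `H`-module `P`, with `λ`-bracket `Br`
and conformally associative, supercommutative product `Ml`, linked by the conformal
Leibniz rule. -/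
structure IsPoissonConfSuper (D : P →ₗ[k] P) (par : ZMod 2 → Submodule k P)
    (Br Ml : P →ₗ[k] P →ₗ[k] (ℕ →₀ P)) : Prop where
  lie : IsLieConfSuper k D par Br
  mul_sesqui : IsSesqui k D D D Ml
  mul_parity : ∀ i j a b, a ∈ par i → b ∈ par j → ∀ n, Ml a b n ∈ par (i + j)
  assoc : ∀ a b c, opComp k Ml Ml a b c = opSubst k Ml Ml a b c
  comm : ∀ i j a b, a ∈ par i → b ∈ par j → Ml a b = sgn i j • substNeg k D (Ml b a)
  leibniz : ∀ i j a b c, a ∈ par i → b ∈ par j →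
    opComp k Br Ml a b c = opSubst k Br Ml a b c + sgn i j • opCompSwap k Ml Br b a c

/-- A conformal representation of the Lie conformal superalgebra `(L, D, par, Br)` on the
`ℤ₂`-graded `H`-module `(V, DV, parV)`. -/
structure IsConfRep (D : L →ₗ[k] L) (par : ZMod 2 → Submodule k L)
    (Br : L →ₗ[k] L →ₗ[k] (ℕ →₀ L)) (DV : V →ₗ[k] V) (parV : ZMod 2 → Submodule k V)
    (ρ : L →ₗ[k] V →ₗ[k] (ℕ →₀ V)) : Prop where
  sesqui : IsSesqui k D DV DV ρ
  parity : ∀ i j a x, a ∈ par i → x ∈ parV j → ∀ n, ρ a x n ∈ parV (i + j)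
  jacobi : ∀ i j a b x, a ∈ par i → b ∈ par j →
    opComp k ρ ρ a b x - sgn i j • opCompSwap k ρ ρ b a x = opSubst k Br ρ a b x

/-- Finiteness of an `H`-module: it is generated, as a `k[∂]`-module, by finitely
many elements. -/
def IsHFinite (DV : V →ₗ[k] V) : Prop :=
  ∃ s : Finset V, ∀ W : Submodule k V, (∀ x ∈ W, DV x ∈ W) → (↑s : Set V) ⊆ ↑W → W = ⊤

/-- The Lie conformal superalgebra `(L, D, par, Br)` admits a finite faithful conformal
representation. -/
def HasFFR (D : L →ₗ[k] L) (par : ZMod 2 → Submodule k L)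
    (Br : L →ₗ[k] L →ₗ[k] (ℕ →₀ L)) : Prop :=
  ∃ (V : Type) (_ : AddCommGroup V) (_ : Module k V) (DV : V →ₗ[k] V)
    (parV : ZMod 2 → Submodule k V) (ρ : L →ₗ[k] V →ₗ[k] (ℕ →₀ V)),
    IsGradedHMod k DV parV ∧ IsConfRep k D par Br DV parV ρ ∧ IsHFinite k DV ∧
      ∀ a : L, a ≠ 0 → ρ a ≠ 0

/-- `ρ` (defined on the ambient space `P`) restricts to a conformal representation of the
Lie conformal subalgebra `L ≤ P` (with ambient `λ`-bracket `Br`) on `(V, DV, parV)`. -/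
def IsConfRepOn (D : P →ₗ[k] P) (par : ZMod 2 → Submodule k P)
    (Br : P →ₗ[k] P →ₗ[k] (ℕ →₀ P)) (L : Submodule k P)
    (DV : V →ₗ[k] V) (parV : ZMod 2 → Submodule k V)
    (ρ : P →ₗ[k] V →ₗ[k] (ℕ →₀ V)) : Prop :=
  (∀ a ∈ L, ∀ x, ρ (D a) x = -(lamMul k (ρ a x))) ∧
  (∀ a ∈ L, ∀ x, ρ a (DV x) = cw k DV (ρ a x) + lamMul k (ρ a x)) ∧
  (∀ i j, ∀ a ∈ L ⊓ par i, ∀ x ∈ parV j, ∀ n, ρ a x n ∈ parV (i + j)) ∧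
  (∀ i j, ∀ a ∈ L ⊓ par i, ∀ b ∈ L ⊓ par j, ∀ x,
    opComp k ρ ρ a b x - sgn i j • opCompSwap k ρ ρ b a x = opSubst k Br ρ a b x)

end Structures
section Extension

variable {A B W V : Type} [AddCommGroup A] [Module k A] [AddCommGroup B] [Module k B]
  [AddCommGroup W] [Module k W] [AddCommGroup V] [Module k V]

/-- The sesqui-linear extension of a pairing `F : A ⊗ B → W[λ]` to a pairing
`(H ⊗ A) ⊗ (H ⊗ B) → W[λ]` (where `H ⊗ A` is realized as `ℕ →₀ A`, the index recording
the power of `∂`): `F(∂^n a, ∂^m b) = (-λ)^n (∂+λ)^m F(a, b)`, where `∂` acts on `W[λ]`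
coefficientwise via `DW`. -/
def extSesqui (DW : W →ₗ[k] W) (F : A →ₗ[k] B →ₗ[k] (ℕ →₀ W)) :
    (ℕ →₀ A) →ₗ[k] (ℕ →₀ B) →ₗ[k] (ℕ →₀ W) :=
  Finsupp.lsum k fun n =>
    (Finsupp.lsum (R := k) k).toLinearMap.comp <| LinearMap.pi fun m =>
      (LinearMap.llcomp k B (ℕ →₀ W) (ℕ →₀ W)
        (((-(lamMul k (M := W))) ^ n) * ((cw k DW + lamMul k) ^ m))).comp F

/-- The action of `∂` on `H ⊗ V`, realized as `ℕ →₀ V`. -/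
def DD (V : Type) [AddCommGroup V] [Module k V] : (ℕ →₀ V) →ₗ[k] (ℕ →₀ V) :=
  Finsupp.lmapDomain V k Nat.succ

/-- The canonical embedding `V → H ⊗ V`. -/
def emb (V : Type) [AddCommGroup V] [Module k V] : V →ₗ[k] (ℕ →₀ V) :=
  Finsupp.lsingle 0

/-- A grading of `V` lifts coefficientwise to a grading of `H ⊗ V = ℕ →₀ V`. -/
def liftPar {V : Type} [AddCommGroup V] [Module k V] (par : ZMod 2 → Submodule k V)
    (i : ZMod 2) : Submodule k (ℕ →₀ V) where
  carrier := { f | ∀ n, f n ∈ par i }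
  add_mem' := fun hf hg n => by
    simpa only [Finsupp.add_apply] using add_mem (hf n) (hg n)
  zero_mem' := fun n => by simp
  smul_mem' := fun c f hf n => by
    simpa only [Finsupp.smul_apply] using Submodule.smul_mem _ c (hf n)

end Extension

section Super

variable (p : Type) [NonUnitalRing p] [Module k p] [SMulCommClass k p p] [IsScalarTower k p p]

/-- An (ordinary) Poisson superalgebra structure on the `ℤ₂`-graded associative
supercommutative algebra `p`, with super Lie bracket `br`. -/
structure IsPoissonSuper (par : ZMod 2 → Submodule k p) (br : p →ₗ[k] p →ₗ[k] p) : Prop where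
  sup_eq_top : par 0 ⊔ par 1 = ⊤
  inf_eq_bot : par 0 ⊓ par 1 = ⊥
  mul_mem : ∀ i j (a b : p), a ∈ par i → b ∈ par j → a * b ∈ par (i + j)
  mul_scomm : ∀ i j (a b : p), a ∈ par i → b ∈ par j → a * b = sgn i j • (b * a)
  br_mem : ∀ i j a b, a ∈ par i → b ∈ par j → br a b ∈ par (i + j)
  br_skew : ∀ i j a b, a ∈ par i → b ∈ par j → br a b = -(sgn i j • br b a)
  br_jacobi : ∀ i j a b c, a ∈ par i → b ∈ par j →
    br a (br b c) = br (br a b) c + sgn i j • br b (br a c)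
  leibniz : ∀ i j a b c, a ∈ par i → b ∈ par j →
    br a (b * c) = br a b * c + sgn i j • (b * br a c)

/-- An even derivation of the Poisson superalgebra `(p, par, br)`. -/
structure IsEvenDerivation (par : ZMod 2 → Submodule k p) (br : p →ₗ[k] p →ₗ[k] p)
    (d : p →ₗ[k] p) : Prop where
  even : ∀ i a, a ∈ par i → d a ∈ par i
  map_mul : ∀ a b, d (a * b) = d a * b + a * d b
  map_br : ∀ a b, d (br a b) = br (d a) b + br a (d b)

/-- Base pairing `a ⊗ b ↦ a b` (constant in `λ`) for the current/quadratic constructions. -/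
def curMul0 : p →ₗ[k] p →ₗ[k] (ℕ →₀ (ℕ →₀ p)) :=
  (LinearMap.mul k p).compr₂ ((cst k).comp (emb k p))

/-- Base pairing `a ⊗ b ↦ {a, b}` (constant in `λ`) for the current construction. -/
def curBr0 (br : p →ₗ[k] p →ₗ[k] p) : p →ₗ[k] p →ₗ[k] (ℕ →₀ (ℕ →₀ p)) :=
  br.compr₂ ((cst k).comp (emb k p))

/-- Base pairing `a ⊗ b ↦ {a, b} + ∂ (d a · b) + λ d(a b)` of the Poisson conformal
superalgebra `L(p, d)`. -/
def qua0 (br : p →ₗ[k] p →ₗ[k] p) (d : p →ₗ[k] p) : p →ₗ[k] p →ₗ[k] (ℕ →₀ (ℕ →₀ p)) :=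
  br.compr₂ ((cst k).comp (emb k p))
    + ((LinearMap.mul k p).comp d).compr₂ ((cst k).comp ((DD k p).comp (emb k p)))
    + ((LinearMap.mul k p).compr₂ d).compr₂ ((lamMul k).comp ((cst k).comp (emb k p)))

/-- The multiplication `(a ∂^n)_λ (b ∂^m) = (-λ)^n (∂+λ)^m (a b)` on `H ⊗ p`. -/
def LpdMul : (ℕ →₀ p) →ₗ[k] (ℕ →₀ p) →ₗ[k] (ℕ →₀ (ℕ →₀ p)) :=
  extSesqui k (DD k p) (curMul0 k p)

/-- The `λ`-bracket of the current Poisson conformal superalgebra `Cur p`. -/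
def CurBr (br : p →ₗ[k] p →ₗ[k] p) : (ℕ →₀ p) →ₗ[k] (ℕ →₀ p) →ₗ[k] (ℕ →₀ (ℕ →₀ p)) :=
  extSesqui k (DD k p) (curBr0 k p br)

/-- The `λ`-bracket of the Poisson conformal superalgebra `L(p, d)`. -/
def LpdBr (br : p →ₗ[k] p →ₗ[k] p) (d : p →ₗ[k] p) :
    (ℕ →₀ p) →ₗ[k] (ℕ →₀ p) →ₗ[k] (ℕ →₀ (ℕ →₀ p)) :=
  extSesqui k (DD k p) (qua0 k p br d)

/-- The twisted action `ρ̂_λ(a, u) = [a_λ u] + λ (a_λ u)` on `L(p, d)`. -/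
def LpdRho (br : p →ₗ[k] p →ₗ[k] p) (d : p →ₗ[k] p) :
    (ℕ →₀ p) →ₗ[k] (ℕ →₀ p) →ₗ[k] (ℕ →₀ (ℕ →₀ p)) :=
  LpdBr k p br d + (LpdMul k p).compr₂ (lamMul k)

end Super

/-- The `H = k[∂]`-submodule generated by a set `S` (where `∂` acts via `D`). -/
def hSpan {A : Type} [AddCommGroup A] [Module k A] (D : A →ₗ[k] A) (S : Set A) :
    Submodule k A :=
  Submodule.span k (⋃ n : ℕ, (D ^ n) '' S)

/-- The filtration of an associative conformal envelope: `A₀ = 0`, `A₁ = B`, and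
`A_{n+1}` is the `H`-submodule generated by all `λ`-coefficients of `(b_λ u)`,
`b ∈ B`, `u ∈ A_n`. -/
def filt {A : Type} [AddCommGroup A] [Module k A] (D : A →ₗ[k] A)
    (Ml : A →ₗ[k] A →ₗ[k] (ℕ →₀ A)) (B : Submodule k A) : ℕ → Submodule k A
  | 0 => ⊥
  | 1 => B
  | n + 2 => hSpan k D {x | ∃ b ∈ B, ∃ u ∈ filt D Ml B (n + 1), ∃ j, Ml b u j = x}

/-! ### Auxiliary machinery for `envelope_filtration` -/

section AuxOps

variable {M N P V W : Type} [AddCommGroup M] [Module k M] [AddCommGroup N] [Module k N]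
  [AddCommGroup P] [Module k P] [AddCommGroup V] [Module k V] [AddCommGroup W] [Module k W]

/-- The operator `-∂-λ` on `M[λ]`. -/
def dop (D : M →ₗ[k] M) : (ℕ →₀ M) →ₗ[k] (ℕ →₀ M) := -(cw k D) - lamMul k

/-- The operator underlying `opSubst`. -/
def opS : (ℕ →₀ (ℕ →₀ M)) →ₗ[k] (ℕ →₀ (ℕ →₀ M)) :=
  Finsupp.lsum k fun n => ((lamMul2 k) ^ n) ∘ₗ substAdd k

/-- The operator `λ+μ` on `M[λ,μ]`. -/
def sop : (ℕ →₀ (ℕ →₀ M)) →ₗ[k] (ℕ →₀ (ℕ →₀ M)) := lamMul2 k + muMul2 k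

/-- The operator `μ-λ` on `M[λ,μ]`. -/
def dsop : (ℕ →₀ (ℕ →₀ M)) →ₗ[k] (ℕ →₀ (ℕ →₀ M)) := muMul2 k - lamMul2 k

/-- The substitution `μ ↦ μ-λ` on `M[λ,μ]`, inverse to `opS` up to `swapVar`. -/
def invS : (ℕ →₀ (ℕ →₀ M)) →ₗ[k] (ℕ →₀ (ℕ →₀ M)) :=
  Finsupp.lsum k fun p => ((dsop k) ^ p) ∘ₗ Finsupp.lsingle 0

/-- The operator `-∂-λ-μ` on `M[λ,μ]`. -/
def op3 (D : M →ₗ[k] M) : (ℕ →₀ (ℕ →₀ M)) →ₗ[k] (ℕ →₀ (ℕ →₀ M)) :=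
  -(cw k (cw k D)) - lamMul2 k - muMul2 k

/-- The substitution `λ' ↦ μ`, `μ' ↦ -∂-λ-μ` on `M[λ',μ']`. -/
def psi (D : M →ₗ[k] M) : (ℕ →₀ (ℕ →₀ M)) →ₗ[k] (ℕ →₀ (ℕ →₀ M)) :=
  Finsupp.lsum k fun p => ((op3 k D) ^ p) ∘ₗ cw k (cst k)

/-- The commutator bracket `[a_λ b] = (a_λ b) - s (b_{-∂-λ} a)` with sign `s`. -/
def brk (D : M →ₗ[k] M) (Ml : M →ₗ[k] M →ₗ[k] (ℕ →₀ M)) (s : ℤ) (a : M) :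
    M →ₗ[k] (ℕ →₀ M) :=
  Ml a - s • ((substNeg k D) ∘ₗ (Ml.flip a))

/-- The submodule of polynomials all of whose coefficients lie in `W`. -/
def coeffSub (W : Submodule k M) : Submodule k (ℕ →₀ M) where
  carrier := {f | ∀ t, f t ∈ W}
  add_mem' hf hg t := by simpa using add_mem (hf t) (hg t)
  zero_mem' t := by simp
  smul_mem' c f hf t := by simpa using Submodule.smul_mem _ c (hf t)

lemma mem_coeffSub {W : Submodule k M} {f : ℕ →₀ M} :
    f ∈ coeffSub k W ↔ ∀ t, f t ∈ W := Iff.rfl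

section Lemmas

set_option linter.unusedSectionVars false

/-! #### basic `single` computations -/

lemma cst_apply (x : M) : cst k x = single 0 x := rfl

lemma cst2_apply (x : M) : cst2 k x = single 0 (single 0 x) := rfl

lemma cw_single (f : M →ₗ[k] N) (n : ℕ) (x : M) : cw k f (single n x) = single n (f x) := by
  simp [cw]

lemma cw_apply (f : M →ₗ[k] N) (g : ℕ →₀ M) (t : ℕ) : cw k f g t = f (g t) := by
  simp [cw, Finsupp.mapRange_apply]

lemma cw_comp (f : N →ₗ[k] P) (g : M →ₗ[k] N) : cw k f ∘ₗ cw k g = cw k (f ∘ₗ g) := by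
  ext n x; simp [cw_single]

lemma cw_sub (f g : M →ₗ[k] N) : cw k (f - g) = cw k f - cw k g := by
  refine Finsupp.lhom_ext fun n x => ?_
  simp only [cw_single, LinearMap.sub_apply, Finsupp.single_sub]

lemma cw_zsmul (s : ℤ) (f : M →ₗ[k] N) : cw k (s • f) = s • cw k f := by
  refine Finsupp.lhom_ext fun n x => ?_
  simp only [cw_single, LinearMap.smul_apply, Finsupp.smul_single]

lemma cw_pow (f : M →ₗ[k] M) (n : ℕ) : (cw k f) ^ n = cw k (f ^ n) := by
  induction n with
  | zero => ext p x; simp [cw_single]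
  | succ n ih =>
      rw [pow_succ, pow_succ, ih, Module.End.mul_eq_comp, Module.End.mul_eq_comp, cw_comp]

/-- A two-layer extensionality principle for maps out of `M[λ,μ]`. -/
lemma lhom_ext2 {φ ψ : (ℕ →₀ (ℕ →₀ M)) →ₗ[k] V}
    (h : ∀ n q (y : M), φ (single n (single q y)) = ψ (single n (single q y))) : φ = ψ := by
  refine Finsupp.lhom_ext fun n g => ?_
  induction g using Finsupp.induction_linear with
  | zero => rw [Finsupp.single_zero, map_zero, map_zero]
  | add f g hf hg => rw [Finsupp.single_add, map_add, map_add, hf, hg]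
  | single q y => exact h n q y

lemma shift_cw_comm (f : M →ₗ[k] N) :
    Finsupp.lmapDomain N k Nat.succ ∘ₗ cw k f = cw k f ∘ₗ Finsupp.lmapDomain M k Nat.succ := by
  ext n x; simp [cw_single]

lemma shift_pow_single (p n : ℕ) (v : V) :
    ((Finsupp.lmapDomain V k Nat.succ) ^ p) (single n v) = single (n + p) v := by
  induction p generalizing n with
  | zero => simp
  | succ p ih =>
      rw [pow_succ', Module.End.mul_apply, ih]
      simp only [Finsupp.lmapDomain_apply, Finsupp.mapDomain_single]
      rfl

lemma lamMul_single (n : ℕ) (x : M) : lamMul k (single n x) = single (n + 1) x := by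
  simp [lamMul]

lemma lamMul_pow_single (p n : ℕ) (x : M) :
    ((lamMul k) ^ p) (single n x) = single (n + p) x := shift_pow_single k p n x

lemma shift_apply_zero (f : ℕ →₀ V) : Finsupp.lmapDomain V k Nat.succ f 0 = 0 := by
  rw [Finsupp.lmapDomain_apply]
  exact Finsupp.mapDomain_notin_range _ _ (by simp)

lemma shift_apply_succ (f : ℕ →₀ V) (t : ℕ) :
    Finsupp.lmapDomain V k Nat.succ f (t + 1) = f t := by
  rw [Finsupp.lmapDomain_apply]
  exact Finsupp.mapDomain_apply Nat.succ_injective _ _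

lemma lam2_single (p : ℕ) (g : ℕ →₀ M) :
    lamMul2 k (single p g) = single p (lamMul k g) := by
  simp [lamMul2, cw_single]

lemma mu2_single (p : ℕ) (g : ℕ →₀ M) : muMul2 k (single p g) = single (p + 1) g := by
  simp [muMul2]

lemma swap_single (n : ℕ) (g : ℕ →₀ M) :
    swapVar k (single n g) = cw k (Finsupp.lsingle n) g := by
  simp [swapVar]

lemma swapVar_apply (h : ℕ →₀ (ℕ →₀ M)) (a b : ℕ) : swapVar k h a b = h b a := by
  induction h using Finsupp.induction_linear with
  | zero => simp
  | add f g hf hg => simp [map_add, hf, hg]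
  | single n g =>
      rw [swap_single, cw_apply]
      rcases eq_or_ne n b with rfl | hx
      · simp [Finsupp.single_apply]
      · simp [Finsupp.single_apply, hx]

lemma substNeg_single (D : M →ₗ[k] M) (n : ℕ) (x : M) :
    substNeg k D (single n x) = ((dop k D) ^ n) (single 0 x) := by
  simp [substNeg, dop, cst]

lemma substAdd_single (n : ℕ) (x : M) :
    substAdd k (single n x) = ((sop k) ^ n) (cst2 k x) := by
  simp [substAdd, sop]

lemma opS_single (n : ℕ) (g : ℕ →₀ M) :
    opS k (single n g) = ((lamMul2 k (M := M)) ^ n) (substAdd k g) := by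
  simp [opS]

lemma invS_single (p : ℕ) (g : ℕ →₀ M) :
    invS k (single p g) = ((dsop k) ^ p) (single 0 g) := by
  simp [invS]

lemma psi_single (D : M →ₗ[k] M) (p : ℕ) (g : ℕ →₀ M) :
    psi k D (single p g) = ((op3 k D) ^ p) (cw k (cst k) g) := by
  simp [psi]

/-! #### intertwining identities -/

lemma semiconj_comp_pow (G : V →ₗ[k] W) (x : V →ₗ[k] V) (y : W →ₗ[k] W)
    (h : y ∘ₗ G = G ∘ₗ x) : ∀ p : ℕ, (y ^ p) ∘ₗ G = G ∘ₗ (x ^ p) := by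
  intro p
  induction p with
  | zero => simp [pow_zero, Module.End.one_eq_id]
  | succ p ih =>
      rw [pow_succ, pow_succ, Module.End.mul_eq_comp, Module.End.mul_eq_comp,
        LinearMap.comp_assoc, h, ← LinearMap.comp_assoc, ih, LinearMap.comp_assoc]

lemma semiconj_pow_apply (G : V →ₗ[k] W) (x : V →ₗ[k] V) (y : W →ₗ[k] W)
    (h : y ∘ₗ G = G ∘ₗ x) (p : ℕ) (v : V) : (y ^ p) (G v) = G ((x ^ p) v) := by
  have := LinearMap.congr_fun (semiconj_comp_pow k G x y h p) v
  simpa using this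

lemma dop_single (D : M →ₗ[k] M) (n : ℕ) (x : M) :
    dop k D (single n x) = -(single n (D x)) - single (n + 1) x := by
  simp [dop, cw_single, lamMul_single]

lemma substNeg_lamMul (D : M →ₗ[k] M) :
    substNeg k D ∘ₗ lamMul k = dop k D ∘ₗ substNeg k D := by
  refine Finsupp.lhom_ext fun n x => ?_
  simp only [LinearMap.comp_apply, lamMul_single, substNeg_single]
  rw [pow_succ', Module.End.mul_apply]

lemma dop_cwD (D : M →ₗ[k] M) : dop k D ∘ₗ cw k D = cw k D ∘ₗ dop k D := by
  refine Finsupp.lhom_ext fun n x => ?_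
  simp [dop_single, cw_single, dop, lamMul_single, map_sub, map_neg]

lemma substNeg_cwD (D : M →ₗ[k] M) :
    substNeg k D ∘ₗ cw k D = cw k D ∘ₗ substNeg k D := by
  refine Finsupp.lhom_ext fun n x => ?_
  simp only [LinearMap.comp_apply, cw_single, substNeg_single]
  rw [show (single 0 (D x) : ℕ →₀ M) = cw k D (single 0 x) from (cw_single k D 0 x).symm]
  exact semiconj_pow_apply k (cw k D) (dop k D) (dop k D) (dop_cwD k D) n _

lemma substNeg_dop (D : M →ₗ[k] M) :
    substNeg k D ∘ₗ dop k D = lamMul k ∘ₗ substNeg k D := by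
  have h1 := substNeg_lamMul k D
  have h2 := substNeg_cwD k D
  have e : substNeg k D ∘ₗ dop k D
      = -(cw k D ∘ₗ substNeg k D) - dop k D ∘ₗ substNeg k D := by
    conv_lhs => rw [dop]
    rw [LinearMap.comp_sub, LinearMap.comp_neg, h1, h2]
  rw [e, dop]
  refine LinearMap.ext fun f => ?_
  simp only [LinearMap.sub_apply, LinearMap.neg_apply, LinearMap.comp_apply]
  abel

lemma substNeg_invol (D : M →ₗ[k] M) :
    substNeg k D ∘ₗ substNeg k D = LinearMap.id := by
  refine Finsupp.lhom_ext fun n x => ?_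
  simp only [LinearMap.comp_apply, LinearMap.id_apply, substNeg_single]
  have h := semiconj_pow_apply k (substNeg k D) (dop k D) (lamMul k)
    (substNeg_dop k D).symm n (single 0 x)
  rw [← h, substNeg_single, pow_zero, Module.End.one_apply, lamMul_pow_single]
  simp

lemma substAdd_lamMul :
    substAdd k ∘ₗ lamMul k = sop k ∘ₗ (substAdd k (M := M)) := by
  refine Finsupp.lhom_ext fun n x => ?_
  simp only [LinearMap.comp_apply, lamMul_single, substAdd_single]
  rw [pow_succ', Module.End.mul_apply]

lemma mu2_lam2_comm : muMul2 k ∘ₗ lamMul2 k = lamMul2 k ∘ₗ (muMul2 k (M := M)) :=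
  shift_cw_comm k (lamMul k)

lemma lam2_sub_comm :
    dsop k ∘ₗ lamMul2 k = lamMul2 k ∘ₗ (dsop k (M := M)) := by
  rw [dsop, LinearMap.sub_comp, LinearMap.comp_sub, mu2_lam2_comm]

lemma invS_lam2 : invS k ∘ₗ lamMul2 k = lamMul2 k ∘ₗ (invS k (M := M)) := by
  refine Finsupp.lhom_ext fun n g => ?_
  simp only [LinearMap.comp_apply, lam2_single, invS_single]
  rw [show (single 0 (lamMul k g) : ℕ →₀ (ℕ →₀ M)) = lamMul2 k (single 0 g) from
    (lam2_single k 0 g).symm]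
  exact semiconj_pow_apply k (lamMul2 k) (dsop k) (dsop k) (lam2_sub_comm k) n _

lemma invS_mu2 : invS k ∘ₗ muMul2 k = dsop k ∘ₗ (invS k (M := M)) := by
  refine Finsupp.lhom_ext fun n g => ?_
  simp only [LinearMap.comp_apply, mu2_single, invS_single]
  rw [pow_succ', Module.End.mul_apply]

lemma invS_sum : invS k ∘ₗ sop k = muMul2 k ∘ₗ (invS k (M := M)) := by
  rw [sop, LinearMap.comp_add, invS_lam2, invS_mu2, ← LinearMap.add_comp]
  congr 1
  rw [dsop]
  abel

lemma invS_substAdd : invS k ∘ₗ substAdd k = cw k (cst k (M := M)) := by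
  refine Finsupp.lhom_ext fun n y => ?_
  simp only [LinearMap.comp_apply, substAdd_single]
  have h := semiconj_pow_apply k (invS k) (sop k) (muMul2 k) (invS_sum k).symm n (cst2 k y)
  rw [← h, cst2_apply, invS_single, pow_zero, Module.End.one_apply]
  rw [show muMul2 k (M := M) = Finsupp.lmapDomain (ℕ →₀ M) k Nat.succ from rfl,
    shift_pow_single, cw_single, cst_apply]
  simp

lemma lam2_pow_cwcst (n : ℕ) :
    ((lamMul2 k) ^ n) ∘ₗ cw k (cst k) = cw k (Finsupp.lsingle n (M := M) (R := k)) := by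
  rw [show lamMul2 k (M := M) = cw k (lamMul k) from rfl, cw_pow, cw_comp]
  congr 1
  ext y
  simp [cst_apply, lamMul_pow_single]

lemma invS_opS : invS k ∘ₗ opS k = swapVar k (M := M) := by
  refine Finsupp.lhom_ext fun n g => ?_
  simp only [LinearMap.comp_apply, opS_single, swap_single]
  have h := semiconj_pow_apply k (invS k) (lamMul2 k) (lamMul2 k) (invS_lam2 k).symm n
    (substAdd k g)
  rw [← h]
  have h2 := LinearMap.congr_fun (invS_substAdd k (M := M)) g
  simp only [LinearMap.comp_apply] at h2
  rw [h2,
    show ((lamMul2 k) ^ n) (cw k (cst k) g) = (((lamMul2 k) ^ n) ∘ₗ cw k (cst k)) g from rfl,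
    lam2_pow_cwcst]

/-! #### the substitution `ψ` and sesqui-linear intertwiners -/

lemma op2_single (D : M →ₗ[k] M) (p : ℕ) (g : ℕ →₀ M) :
    op3 k D (single p g) =
      -(single p (cw k D g)) - single p (lamMul k g) - single (p + 1) g := by
  simp only [op3, LinearMap.sub_apply, LinearMap.neg_apply, lam2_single, mu2_single]
  rw [show cw k (cw k D) (single p g) = single p (cw k D g) from cw_single k (cw k D) p g]

lemma op3_mu2 (D : M →ₗ[k] M) :
    op3 k D ∘ₗ muMul2 k = muMul2 k ∘ₗ op3 k D := by
  refine Finsupp.lhom_ext fun p g => ?_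
  simp only [LinearMap.comp_apply, mu2_single, op2_single, map_sub, map_neg, mu2_single]

lemma cwcst_lamMul :
    muMul2 k ∘ₗ cw k (cst k) = cw k (cst k) ∘ₗ lamMul k (M := M) :=
  shift_cw_comm k (cst k)

lemma psi_lam2 (D : M →ₗ[k] M) :
    psi k D ∘ₗ lamMul2 k = muMul2 k ∘ₗ psi k D := by
  refine Finsupp.lhom_ext fun p g => ?_
  simp only [LinearMap.comp_apply, lam2_single, psi_single]
  have e : cw k (cst k) (lamMul k g) = muMul2 k (cw k (cst k) g) := by
    have := LinearMap.congr_fun (cwcst_lamMul k (M := M)) g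
    simp only [LinearMap.comp_apply] at this
    exact this.symm
  rw [e]
  exact semiconj_pow_apply k (muMul2 k) (op3 k D) (op3 k D) (op3_mu2 k D) p _

lemma psi_mu2 (D : M →ₗ[k] M) :
    psi k D ∘ₗ muMul2 k = op3 k D ∘ₗ psi k D := by
  refine Finsupp.lhom_ext fun p g => ?_
  simp only [LinearMap.comp_apply, mu2_single, psi_single]
  rw [pow_succ', Module.End.mul_apply]

/-- The operator `-∂-λ` on `M[λ,μ]`. -/
def op2 (D : M →ₗ[k] M) : (ℕ →₀ (ℕ →₀ M)) →ₗ[k] (ℕ →₀ (ℕ →₀ M)) :=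
  -(cw k (cw k D)) - lamMul2 k

lemma op2_eq_cw (D : M →ₗ[k] M) : op2 k D = cw k (dop k D) := by
  refine Finsupp.lhom_ext fun p g => ?_
  simp only [op2, dop, LinearMap.sub_apply, LinearMap.neg_apply, lam2_single, cw_single]
  simp [Finsupp.single_neg, Finsupp.single_sub]

lemma psi_sop (D : M →ₗ[k] M) : psi k D ∘ₗ sop k = op2 k D ∘ₗ psi k D := by
  rw [sop, LinearMap.comp_add, psi_lam2, psi_mu2, ← LinearMap.add_comp]
  congr 1
  rw [op2, op3]
  abel

lemma psi_substAdd (D : M →ₗ[k] M) :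
    psi k D ∘ₗ substAdd k = Finsupp.lsingle 0 ∘ₗ substNeg k D := by
  refine Finsupp.lhom_ext fun ν y => ?_
  simp only [LinearMap.comp_apply, substAdd_single]
  have h := semiconj_pow_apply k (psi k D) (sop k) (op2 k D) (psi_sop k D).symm ν (cst2 k y)
  rw [← h]
  have e0 : psi k D (cst2 k y) = cst2 k y := by
    rw [cst2_apply, psi_single, pow_zero, Module.End.one_apply, cw_single, cst_apply]
  rw [e0, op2_eq_cw, cw_pow, cst2_apply, cw_single, substNeg_single]
  rfl

lemma psi_opS (D : M →ₗ[k] M) : psi k D ∘ₗ opS k = cw k (substNeg k D) := by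
  refine Finsupp.lhom_ext fun n g => ?_
  simp only [LinearMap.comp_apply, opS_single, cw_single]
  have h := semiconj_pow_apply k (psi k D) (lamMul2 k) (muMul2 k) (psi_lam2 k D).symm n
    (substAdd k g)
  rw [← h]
  have e := LinearMap.congr_fun (psi_substAdd k D) g
  simp only [LinearMap.comp_apply] at e
  rw [e, show Finsupp.lsingle (R := k) 0 (substNeg k D g) = single 0 (substNeg k D g) from rfl,
    show muMul2 k (M := M) = Finsupp.lmapDomain (ℕ →₀ M) k Nat.succ from rfl,
    shift_pow_single]
  simp

lemma cwcw_cwlsingle (f : M →ₗ[k] M) (q : ℕ) :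
    cw k (cw k f) ∘ₗ cw k (Finsupp.lsingle q) =
      cw k (Finsupp.lsingle q (M := M) (R := k)) ∘ₗ cw k f := by
  refine Finsupp.lhom_ext fun n x => ?_
  simp [cw_single]

lemma lam2_cwlsingle (q : ℕ) :
    lamMul2 k ∘ₗ cw k (Finsupp.lsingle q) = cw k (Finsupp.lsingle (q + 1) (M := M) (R := k)) := by
  refine Finsupp.lhom_ext fun n x => ?_
  simp only [LinearMap.comp_apply, cw_single, Finsupp.lsingle_apply]
  rw [show lamMul2 k (M := M) = cw k (lamMul k) from rfl, cw_single, lamMul_single]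

lemma mu2_cwlsingle (q : ℕ) :
    muMul2 k ∘ₗ cw k (Finsupp.lsingle q) =
      cw k (Finsupp.lsingle q (M := M) (R := k)) ∘ₗ lamMul k :=
  shift_cw_comm k (Finsupp.lsingle q)

lemma op3_swap_cwF (D : M →ₗ[k] M) (F : M →ₗ[k] (ℕ →₀ M))
    (hF : ∀ x, F (D x) = cw k D (F x) + lamMul k (F x)) :
    op3 k D ∘ₗ (swapVar k ∘ₗ cw k F) = (swapVar k ∘ₗ cw k F) ∘ₗ dop k D := by
  refine Finsupp.lhom_ext fun q x => ?_
  simp only [LinearMap.comp_apply, dop_single, map_sub, map_neg, cw_single, swap_single,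
    hF, map_add]
  have e1 := LinearMap.congr_fun (cwcw_cwlsingle k D q) (F x)
  have e2 := LinearMap.congr_fun (lam2_cwlsingle k (M := M) q) (F x)
  have e3 := LinearMap.congr_fun (mu2_cwlsingle k (M := M) q) (F x)
  simp only [LinearMap.comp_apply] at e1 e2 e3
  simp only [op3, LinearMap.sub_apply, LinearMap.neg_apply, e1, e2, e3]
  abel

lemma psi_cwF (D : M →ₗ[k] M) (F : M →ₗ[k] (ℕ →₀ M))
    (hF : ∀ x, F (D x) = cw k D (F x) + lamMul k (F x)) :
    psi k D ∘ₗ cw k F = swapVar k ∘ₗ cw k F ∘ₗ substNeg k D := by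
  refine Finsupp.lhom_ext fun p y => ?_
  simp only [LinearMap.comp_apply, cw_single, psi_single, substNeg_single]
  have h := LinearMap.congr_fun
    (semiconj_comp_pow k (swapVar k ∘ₗ cw k F) (dop k D) (op3 k D) (op3_swap_cwF k D F hF) p)
    (single 0 y)
  simp only [LinearMap.comp_apply] at h
  rw [← h, cw_single, swap_single]
  rfl

lemma opS_cwF'_dop (D : M →ₗ[k] M) (F' : M →ₗ[k] (ℕ →₀ M))
    (hF' : ∀ x, F' (D x) = -(lamMul k (F' x))) :
    (opS k ∘ₗ cw k F') ∘ₗ dop k D = muMul2 k ∘ₗ (opS k ∘ₗ cw k F') := by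
  refine Finsupp.lhom_ext fun q x => ?_
  simp only [LinearMap.comp_apply, dop_single, map_sub, map_neg, cw_single, hF',
    Finsupp.single_neg, map_neg, opS_single]
  have e1 := LinearMap.congr_fun (substAdd_lamMul k (M := M)) (F' x)
  simp only [LinearMap.comp_apply] at e1
  rw [e1]
  have e2 : ((lamMul2 k (M := M)) ^ (q + 1)) (substAdd k (F' x))
      = ((lamMul2 k) ^ q) (lamMul2 k (substAdd k (F' x))) := by
    rw [pow_succ, Module.End.mul_apply]
  rw [e2]
  have e3 : sop k (substAdd k (F' x))
      = lamMul2 k (substAdd k (F' x)) + muMul2 k (substAdd k (F' x)) := rfl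
  rw [e3, map_add]
  have e4 := semiconj_pow_apply k (muMul2 k) (lamMul2 k) (lamMul2 k)
    (mu2_lam2_comm k).symm q (substAdd k (F' x))
  rw [e4]
  abel

lemma swap_lam2 : swapVar k ∘ₗ lamMul2 k = muMul2 k ∘ₗ swapVar k (M := M) := by
  refine Finsupp.lhom_ext fun n g => ?_
  simp only [LinearMap.comp_apply, lam2_single, swap_single]
  have e := LinearMap.congr_fun (mu2_cwlsingle k (M := M) n) g
  simp only [LinearMap.comp_apply] at e
  exact e.symm

lemma swap_mu2 : swapVar k ∘ₗ muMul2 k = lamMul2 k ∘ₗ swapVar k (M := M) := by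
  refine Finsupp.lhom_ext fun n g => ?_
  simp only [LinearMap.comp_apply, mu2_single, swap_single]
  have e := LinearMap.congr_fun (lam2_cwlsingle k (M := M) n) g
  simp only [LinearMap.comp_apply] at e
  exact e.symm

lemma swap_sop : swapVar k ∘ₗ sop k = sop k ∘ₗ swapVar k (M := M) := by
  rw [sop, LinearMap.comp_add, swap_lam2, swap_mu2, ← LinearMap.add_comp]
  congr 1
  abel

lemma swap_substAdd : swapVar k ∘ₗ substAdd k = substAdd k (M := M) := by
  refine Finsupp.lhom_ext fun ν z => ?_
  simp only [LinearMap.comp_apply, substAdd_single]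
  have h2 := semiconj_pow_apply k (swapVar k) (sop k) (sop k) (swap_sop k).symm ν (cst2 k z)
  rw [← h2]
  congr 1
  rw [cst2_apply, swap_single, cw_single]
  rfl

lemma opS_cwF'_substNeg (D : M →ₗ[k] M) (F' : M →ₗ[k] (ℕ →₀ M))
    (hF' : ∀ x, F' (D x) = -(lamMul k (F' x))) :
    opS k ∘ₗ cw k F' ∘ₗ substNeg k D = swapVar k ∘ₗ (opS k ∘ₗ cw k F') := by
  refine Finsupp.lhom_ext fun p y => ?_
  simp only [LinearMap.comp_apply, substNeg_single, cw_single, opS_single]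
  have h := LinearMap.congr_fun
    (semiconj_comp_pow k (opS k ∘ₗ cw k F') (dop k D) (muMul2 k)
      (opS_cwF'_dop k D F' hF').symm p) (single 0 y)
  simp only [LinearMap.comp_apply] at h
  rw [← h, cw_single, opS_single, pow_zero, Module.End.one_apply]
  have hsw := semiconj_pow_apply k (swapVar k) (lamMul2 k) (muMul2 k) (swap_lam2 k).symm p
    (substAdd k (F' y))
  rw [← hsw]
  congr 1
  have h3 := LinearMap.congr_fun (swap_substAdd k (M := M)) (F' y)
  simp only [LinearMap.comp_apply] at h3
  exact h3.symm

/-! #### the commutator bracket -/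

lemma brk_apply (D : M →ₗ[k] M) (Ml : M →ₗ[k] M →ₗ[k] (ℕ →₀ M)) (s : ℤ) (a b : M) :
    brk k D Ml s a b = Ml a b - s • substNeg k D (Ml b a) := by
  simp [brk]

lemma brk_Dright (D : M →ₗ[k] M) (Ml : M →ₗ[k] M →ₗ[k] (ℕ →₀ M))
    (hdl : ∀ a b, Ml (D a) b = -(lamMul k (Ml a b)))
    (hdr : ∀ a b, Ml a (D b) = cw k D (Ml a b) + lamMul k (Ml a b))
    (s : ℤ) (a c : M) :
    brk k D Ml s a (D c) = cw k D (brk k D Ml s a c) + lamMul k (brk k D Ml s a c) := by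
  rw [brk_apply, brk_apply, hdr a c, hdl c a, map_neg]
  have e1 := LinearMap.congr_fun (substNeg_lamMul k D) (Ml c a)
  simp only [LinearMap.comp_apply] at e1
  rw [e1]
  have e2 : dop k D (substNeg k D (Ml c a))
      = -(cw k D (substNeg k D (Ml c a))) - lamMul k (substNeg k D (Ml c a)) := rfl
  rw [e2]
  simp only [map_sub, map_zsmul, smul_sub, smul_neg, sub_neg_eq_add, neg_sub, smul_add]
  abel

lemma brk_skew (D : M →ₗ[k] M) (Ml : M →ₗ[k] M →ₗ[k] (ℕ →₀ M))
    {s : ℤ} (hs : s * s = 1) (a c : M) :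
    brk k D Ml s a c = -(s • substNeg k D (brk k D Ml s c a)) := by
  rw [brk_apply, brk_apply, map_sub, map_zsmul]
  have e := LinearMap.congr_fun (substNeg_invol k D) (Ml a c)
  simp only [LinearMap.comp_apply, LinearMap.id_apply] at e
  rw [e, smul_sub, smul_smul, hs, one_smul, neg_sub]

lemma opComp_def (Ml : M →ₗ[k] M →ₗ[k] (ℕ →₀ M)) (a b c : M) :
    opComp k Ml Ml a b c = cw k (Ml a) (Ml b c) := rfl

lemma opSubst_def (Ml : M →ₗ[k] M →ₗ[k] (ℕ →₀ M)) (a b c : M) :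
    opSubst k Ml Ml a b c = opS k (cw k (Ml.flip c) (Ml a b)) := rfl

/-- The key Leibniz identity for the commutator bracket in an associative
conformal algebra. -/
lemma leibnizI (D : M →ₗ[k] M) (Ml : M →ₗ[k] M →ₗ[k] (ℕ →₀ M))
    (hdl : ∀ a b, Ml (D a) b = -(lamMul k (Ml a b)))
    (hdr : ∀ a b, Ml a (D b) = cw k D (Ml a b) + lamMul k (Ml a b))
    (hassoc : ∀ a b c, opComp k Ml Ml a b c = opSubst k Ml Ml a b c)
    (s1 s2 : ℤ) (a c u : M) :
    cw k (brk k D Ml (s1 * s2) a) (Ml c u)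
      = opS k (cw k (Ml.flip u) (brk k D Ml s1 a c))
        + s1 • swapVar k (cw k (Ml c) (brk k D Ml s2 a u)) := by
  have h1 : cw k (brk k D Ml (s1 * s2) a) (Ml c u)
      = cw k (Ml a) (Ml c u)
        - (s1 * s2) • cw k (substNeg k D) (cw k (Ml.flip a) (Ml c u)) := by
    have e := LinearMap.congr_fun (cw_comp k (substNeg k D) (Ml.flip a)) (Ml c u)
    simp only [LinearMap.comp_apply] at e
    rw [brk, cw_sub, cw_zsmul, LinearMap.sub_apply, LinearMap.smul_apply, e]
  have h2 : cw k (Ml a) (Ml c u) = opS k (cw k (Ml.flip u) (Ml a c)) := hassoc a c u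
  have h3 : cw k (substNeg k D) (cw k (Ml.flip a) (Ml c u))
      = swapVar k (cw k (Ml c) (substNeg k D (Ml u a))) := by
    have e1 := LinearMap.congr_fun (psi_opS k D) (cw k (Ml.flip a) (Ml c u))
    simp only [LinearMap.comp_apply] at e1
    rw [← e1]
    have e2 : opS k (cw k (Ml.flip a) (Ml c u)) = cw k (Ml c) (Ml u a) := (hassoc c u a).symm
    rw [e2]
    have e3 := LinearMap.congr_fun (psi_cwF k D (Ml c) (hdr c)) (Ml u a)
    simp only [LinearMap.comp_apply] at e3
    exact e3
  have h5 : opS k (cw k (Ml.flip u) (substNeg k D (Ml c a)))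
      = swapVar k (cw k (Ml c) (Ml a u)) := by
    have e4 := LinearMap.congr_fun
      (opS_cwF'_substNeg k D (Ml.flip u) (fun x => by
        rw [LinearMap.flip_apply, hdl x u, LinearMap.flip_apply])) (Ml c a)
    simp only [LinearMap.comp_apply] at e4
    rw [e4]
    congr 1
    exact (hassoc c a u).symm
  rw [h1, h2, h3, brk_apply, brk_apply]
  rw [map_sub (cw k (Ml.flip u)), map_zsmul (cw k (Ml.flip u)),
    map_sub (opS k), map_zsmul (opS k), h5,
    map_sub (cw k (Ml c)), map_zsmul (cw k (Ml c)),
    map_sub (swapVar k), map_zsmul (swapVar k)]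
  simp only [smul_sub, smul_smul]
  abel

/-! #### coefficientwise membership -/

lemma coeff_apply {W : Submodule k M} {f : ℕ →₀ M} (h : f ∈ coeffSub k W) (t : ℕ) :
    f t ∈ W := h t

lemma mem_coeff_single {W : Submodule k M} {x : M} (h : x ∈ W) (n : ℕ) :
    (single n x : ℕ →₀ M) ∈ coeffSub k W := by
  refine (mem_coeffSub k).2 fun t => ?_
  rw [Finsupp.single_apply]
  split_ifs
  · exact h
  · exact zero_mem W

lemma lsum_mem {U : Submodule k W} (g : ℕ → V →ₗ[k] W) (f : ℕ →₀ V)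
    (h : ∀ n, g n (f n) ∈ U) : Finsupp.lsum k g f ∈ U := by
  have e : Finsupp.lsum k g f = f.sum fun n v => g n v := by
    simp [Finsupp.lsum_apply, Finsupp.sum]
  rw [e, Finsupp.sum]
  exact Submodule.sum_mem _ fun n _ => h n

lemma coeff_shift {U : Submodule k V} {f : ℕ →₀ V} (h : f ∈ coeffSub k U) :
    Finsupp.lmapDomain V k Nat.succ f ∈ coeffSub k U := by
  refine (mem_coeffSub k).2 fun t => ?_
  cases t with
  | zero => rw [shift_apply_zero]; exact zero_mem U
  | succ t => rw [shift_apply_succ]; exact h t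

lemma coeff_lamMul {U : Submodule k M} {f : ℕ →₀ M} (h : f ∈ coeffSub k U) :
    lamMul k f ∈ coeffSub k U := coeff_shift k h

lemma coeff_cw {U : Submodule k M} {U' : Submodule k N} (φ : M →ₗ[k] N)
    (hφ : ∀ x ∈ U, φ x ∈ U') {f : ℕ →₀ M} (h : f ∈ coeffSub k U) :
    cw k φ f ∈ coeffSub k U' := by
  refine (mem_coeffSub k).2 fun t => ?_
  rw [cw_apply]
  exact hφ _ (h t)

lemma coeff_pow {U : Submodule k V} (φ : V →ₗ[k] V) (hφ : ∀ v ∈ U, φ v ∈ U) :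
    ∀ p : ℕ, ∀ v ∈ U, (φ ^ p) v ∈ U := by
  intro p
  induction p with
  | zero => intro v hv; rw [pow_zero, Module.End.one_apply]; exact hv
  | succ p ih =>
      intro v hv
      rw [pow_succ', Module.End.mul_apply]
      exact hφ _ (ih v hv)

lemma coeff_dop {W : Submodule k M} (D : M →ₗ[k] M) (hD : ∀ x ∈ W, D x ∈ W)
    {f : ℕ →₀ M} (h : f ∈ coeffSub k W) : dop k D f ∈ coeffSub k W := by
  have e : dop k D f = -(cw k D f) - lamMul k f := rfl
  rw [e]
  exact sub_mem (neg_mem (coeff_cw k D hD h)) (coeff_lamMul k h)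

lemma coeff_substNeg {W : Submodule k M} (D : M →ₗ[k] M) (hD : ∀ x ∈ W, D x ∈ W)
    {f : ℕ →₀ M} (h : f ∈ coeffSub k W) : substNeg k D f ∈ coeffSub k W :=
  lsum_mem k _ f fun n =>
    coeff_pow k (dop k D) (fun v hv => coeff_dop k D hD hv) n _ (mem_coeff_single k (h n) 0)

lemma coeff_lam2 {W : Submodule k M} {X : ℕ →₀ (ℕ →₀ M)}
    (h : X ∈ coeffSub k (coeffSub k W)) : lamMul2 k X ∈ coeffSub k (coeffSub k W) :=
  coeff_cw k (lamMul k) (fun _ hg => coeff_lamMul k hg) h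

lemma coeff_mu2 {W : Submodule k M} {X : ℕ →₀ (ℕ →₀ M)}
    (h : X ∈ coeffSub k (coeffSub k W)) : muMul2 k X ∈ coeffSub k (coeffSub k W) :=
  coeff_shift k h

lemma coeff_sop {W : Submodule k M} {X : ℕ →₀ (ℕ →₀ M)}
    (h : X ∈ coeffSub k (coeffSub k W)) : sop k X ∈ coeffSub k (coeffSub k W) := by
  have e : sop k X = lamMul2 k X + muMul2 k X := rfl
  rw [e]
  exact add_mem (coeff_lam2 k h) (coeff_mu2 k h)

lemma coeff_dsop {W : Submodule k M} {X : ℕ →₀ (ℕ →₀ M)}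
    (h : X ∈ coeffSub k (coeffSub k W)) : dsop k X ∈ coeffSub k (coeffSub k W) := by
  have e : dsop k X = muMul2 k X - lamMul2 k X := rfl
  rw [e]
  exact sub_mem (coeff_mu2 k h) (coeff_lam2 k h)

lemma coeff_substAdd {W : Submodule k M} {f : ℕ →₀ M} (h : f ∈ coeffSub k W) :
    substAdd k f ∈ coeffSub k (coeffSub k W) :=
  lsum_mem k _ f fun n =>
    coeff_pow k (sop k) (fun _ hv => coeff_sop k hv) n _
      (mem_coeff_single k (mem_coeff_single k (h n) 0) 0)

lemma coeff_opS {W : Submodule k M} {X : ℕ →₀ (ℕ →₀ M)}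
    (h : X ∈ coeffSub k (coeffSub k W)) : opS k X ∈ coeffSub k (coeffSub k W) :=
  lsum_mem k _ X fun n =>
    coeff_pow k (lamMul2 k) (fun _ hv => coeff_lam2 k hv) n _ (coeff_substAdd k (h n))

lemma coeff_invS {W : Submodule k M} {X : ℕ →₀ (ℕ →₀ M)}
    (h : X ∈ coeffSub k (coeffSub k W)) : invS k X ∈ coeffSub k (coeffSub k W) :=
  lsum_mem k _ X fun p =>
    coeff_pow k (dsop k) (fun _ hv => coeff_dsop k hv) p _ (mem_coeff_single k (h p) 0)

lemma coeff_swap {W : Submodule k M} {X : ℕ →₀ (ℕ →₀ M)}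
    (h : X ∈ coeffSub k (coeffSub k W)) : swapVar k X ∈ coeffSub k (coeffSub k W) := by
  refine (mem_coeffSub k).2 fun a => (mem_coeffSub k).2 fun b => ?_
  rw [swapVar_apply]
  exact h b a

lemma zsmul_mem' (U : Submodule k V) (s : ℤ) {x : V} (h : x ∈ U) : s • x ∈ U :=
  U.toAddSubgroup.zsmul_mem h s

lemma sgn_mul : ∀ i j1 j2 : ZMod 2, sgn i (j1 + j2) = sgn i j1 * sgn i j2 := by decide

lemma sgn_comm : ∀ i j : ZMod 2, sgn i j = sgn j i := by decide

lemma sgn_sq : ∀ i j : ZMod 2, sgn i j * sgn i j = 1 := by decide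

end Lemmas
end AuxOps

section AuxSpan

variable {A : Type} [AddCommGroup A] [Module k A]

set_option linter.unusedSectionVars false

lemma mem_hSpan_self {D : A →ₗ[k] A} {S : Set A} {x : A} (hx : x ∈ S) :
    x ∈ hSpan k D S := by
  apply Submodule.subset_span
  exact Set.mem_iUnion.2 ⟨0, ⟨x, hx, by simp⟩⟩

lemma hSpan_D {D : A →ₗ[k] A} {S : Set A} : ∀ x ∈ hSpan k D S, D x ∈ hSpan k D S := by
  intro x hx
  induction hx using Submodule.span_induction with
  | mem y hy =>
      obtain ⟨U, ⟨n, rfl⟩, z, hz, rfl⟩ := hy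
      apply Submodule.subset_span
      refine Set.mem_iUnion.2 ⟨n + 1, ⟨z, hz, ?_⟩⟩
      rw [pow_succ', Module.End.mul_apply]
  | zero => rw [map_zero]; exact zero_mem _
  | add y z _ _ hy hz => rw [map_add]; exact add_mem hy hz
  | smul c y _ hy => rw [map_smul]; exact Submodule.smul_mem _ c hy

lemma hSpan_le {D : A →ₗ[k] A} {S : Set A} {W : Submodule k A} (hS : S ⊆ ↑W)
    (hW : ∀ x ∈ W, D x ∈ W) : hSpan k D S ≤ W := by
  rw [hSpan, Submodule.span_le]
  intro x hx
  obtain ⟨U, ⟨n, rfl⟩, z, hz, rfl⟩ := hx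
  have : ∀ p : ℕ, (D ^ p) z ∈ W := by
    intro p
    induction p with
    | zero => rw [pow_zero, Module.End.one_apply]; exact hS hz
    | succ p ih => rw [pow_succ', Module.End.mul_apply]; exact hW _ ih
  exact this n

lemma filt_zero (D : A →ₗ[k] A) (Ml : A →ₗ[k] A →ₗ[k] (ℕ →₀ A)) (B : Submodule k A) :
    filt k D Ml B 0 = ⊥ := rfl

lemma filt_one (D : A →ₗ[k] A) (Ml : A →ₗ[k] A →ₗ[k] (ℕ →₀ A)) (B : Submodule k A) :
    filt k D Ml B 1 = B := rfl

lemma filt_add_two (D : A →ₗ[k] A) (Ml : A →ₗ[k] A →ₗ[k] (ℕ →₀ A)) (B : Submodule k A)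
    (n : ℕ) :
    filt k D Ml B (n + 2)
      = hSpan k D {x | ∃ b ∈ B, ∃ u ∈ filt k D Ml B (n + 1), ∃ j, Ml b u j = x} := rfl

/-- Parity-homogeneous generators of the filtration. -/
def genSet (D : A →ₗ[k] A) (Ml : A →ₗ[k] A →ₗ[k] (ℕ →₀ A)) (B : Submodule k A)
    (par : ZMod 2 → Submodule k A) (r : ℕ) (j : ZMod 2) : Set A :=
  {x | ∃ j1 j2 : ZMod 2, j1 + j2 = j ∧ ∃ c ∈ B ⊓ par j1,
    ∃ u ∈ filt k D Ml B (r - 1) ⊓ par j2, ∃ t, Ml c u t = x}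

end AuxSpan


/-- **The envelope filtration is compatible with the product and the commutator.**
Let `A` be a `ℤ₂`-graded associative conformal algebra generated by a parity-graded
`H`-submodule `B` which is closed under the commutator `λ`-bracket
`[a_λ b] = (a_λ b) - (-1)^{|a||b|}(b_{-∂-λ} a)`. Then for the filtration `A₁ = B`,
`A_{n+1} = H·{coefficients of (B_λ A_n)}` one has, for all `n, m ≥ 1`,
`(A_n _λ A_m) ⊆ A_{n+m}[λ]` and `[A_n _λ A_m] ⊆ A_{n+m-1}[λ]`. -/
theorem envelope_filtration
    (A : Type) [AddCommGroup A] [Module k A]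
    (D : A →ₗ[k] A) (par : ZMod 2 → Submodule k A) (Ml : A →ₗ[k] A →ₗ[k] (ℕ →₀ A))
    (hgr : IsGradedHMod k D par)
    (hsesq : IsSesqui k D D D Ml)
    (hpar : ∀ i j a b, a ∈ par i → b ∈ par j → ∀ n, Ml a b n ∈ par (i + j))
    (hassoc : ∀ a b c, opComp k Ml Ml a b c = opSubst k Ml Ml a b c)
    (B : Submodule k A) (hBD : ∀ x ∈ B, D x ∈ B)
    (hBgr : ∀ a ∈ B, ∃ a0 ∈ B ⊓ par 0, ∃ a1 ∈ B ⊓ par 1, a = a0 + a1)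
    (hBcl : ∀ i j, ∀ a ∈ B ⊓ par i, ∀ b ∈ B ⊓ par j, ∀ t,
      (Ml a b - sgn i j • substNeg k D (Ml b a)) t ∈ B)
    (hBgen : ∀ W : Submodule k A, B ≤ W → (∀ x ∈ W, D x ∈ W) →
      (∀ x ∈ W, ∀ y ∈ W, ∀ t, Ml x y t ∈ W) → W = ⊤) :
    ∀ n m : ℕ, 1 ≤ n → 1 ≤ m →
      (∀ a ∈ filt k D Ml B n, ∀ b ∈ filt k D Ml B m, ∀ t,
        Ml a b t ∈ filt k D Ml B (n + m)) ∧
      (∀ i j, ∀ a ∈ filt k D Ml B n ⊓ par i, ∀ b ∈ filt k D Ml B m ⊓ par j, ∀ t,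
        (Ml a b - sgn i j • substNeg k D (Ml b a)) t ∈ filt k D Ml B (n + m - 1)) := by
  classical
  -- ∂ preserves each filtration piece
  have hDf : ∀ r, ∀ x ∈ filt k D Ml B r, D x ∈ filt k D Ml B r := by
    intro r
    rcases r with _ | _ | r
    · intro x hx
      rw [filt_zero, Submodule.mem_bot] at hx ⊢
      rw [hx, map_zero]
    · exact hBD
    · intro x hx
      rw [filt_add_two] at hx ⊢
      exact hSpan_D k x hx
  -- products with B on the left raise the filtration by one
  have hgen : ∀ r, 1 ≤ r → ∀ c ∈ B, ∀ u ∈ filt k D Ml B r, ∀ t,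
      Ml c u t ∈ filt k D Ml B (r + 1) := by
    intro r hr c hc u hu t
    obtain ⟨r', rfl⟩ : ∃ r', r = r' + 1 := ⟨r - 1, by omega⟩
    rw [show r' + 1 + 1 = r' + 2 from rfl, filt_add_two]
    exact mem_hSpan_self k ⟨c, hc, u, hu, t, rfl⟩
  -- part (1): the filtration is compatible with the product
  have hprod : ∀ n', 1 ≤ n' → ∀ m', 1 ≤ m' → ∀ a ∈ filt k D Ml B n',
      ∀ b ∈ filt k D Ml B m', Ml a b ∈ coeffSub k (filt k D Ml B (n' + m')) := by
    intro n'
    induction n' with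
    | zero => intro h; exact absurd h (by omega)
    | succ q ih =>
      intro _ m' hm' a ha b hb
      rcases Nat.eq_zero_or_pos q with rfl | hq
      · refine (mem_coeffSub k).2 fun t => ?_
        have h1 := hgen m' hm' a ha b hb t
        rwa [show m' + 1 = 0 + 1 + m' by omega] at h1
      · obtain ⟨q', rfl⟩ : ∃ q', q = q' + 1 := ⟨q - 1, by omega⟩
        have key : filt k D Ml B (q' + 2) ≤
            Submodule.comap (Ml.flip b) (coeffSub k (filt k D Ml B (q' + 2 + m'))) := by
          rw [filt_add_two]
          apply hSpan_le
          · rintro x ⟨c, hc, u, hu, jx, rfl⟩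
            rw [SetLike.mem_coe, Submodule.mem_comap]
            have hX : opSubst k Ml Ml c u b
                ∈ coeffSub k (coeffSub k (filt k D Ml B (q' + 2 + m'))) := by
              rw [← hassoc]
              refine (mem_coeffSub k).2 fun p => (mem_coeffSub k).2 fun t' => ?_
              rw [opComp_def, cw_apply]
              have h1 : (Ml u b) p ∈ filt k D Ml B (q' + 1 + m') :=
                coeff_apply k (ih (by omega) m' hm' u hu b hb) p
              have h2 := hgen (q' + 1 + m') (by omega) c hc _ h1 t'
              rwa [show q' + 1 + m' + 1 = q' + 2 + m' by omega] at h2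
            have hXX := coeff_invS k hX
            rw [opSubst_def] at hXX
            have h4 := LinearMap.congr_fun (invS_opS k) (cw k (Ml.flip b) (Ml c u))
            simp only [LinearMap.comp_apply] at h4
            rw [h4] at hXX
            refine (mem_coeffSub k).2 fun t' => ?_
            have h5 := coeff_apply k (coeff_apply k hXX t') jx
            rwa [swapVar_apply, cw_apply, LinearMap.flip_apply] at h5
          · intro x hx
            rw [Submodule.mem_comap] at hx ⊢
            have e : (Ml.flip b) (D x) = -(lamMul k ((Ml.flip b) x)) := by
              rw [LinearMap.flip_apply, LinearMap.flip_apply]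
              exact hsesq.dleft x b
            rw [e]
            exact neg_mem (coeff_lamMul k hx)
        have h6 := key ha
        rw [Submodule.mem_comap, LinearMap.flip_apply] at h6
        exact h6
  -- homogeneous generators span the graded pieces
  have hWj : ∀ r : ℕ, 2 ≤ r → ∀ j, hSpan k D (genSet k D Ml B par r j)
      ≤ filt k D Ml B r ⊓ par j := by
    intro r hr j
    apply hSpan_le
    · rintro x ⟨j1, j2, hj, c, hc, u, hu, t, rfl⟩
      rw [SetLike.mem_coe, Submodule.mem_inf]
      constructor
      · have h1 := hgen (r - 1) (by omega) c hc.1 u hu.1 t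
        rwa [show r - 1 + 1 = r by omega] at h1
      · have h2 := hpar j1 j2 c u hc.2 hu.2 t
        rwa [hj] at h2
    · intro x hx
      rw [Submodule.mem_inf] at hx ⊢
      exact ⟨hDf r x hx.1, hgr.map_d j x hx.2⟩
  have hGS : ∀ r, (∀ x ∈ filt k D Ml B r, ∃ x0 ∈ filt k D Ml B r ⊓ par 0,
        ∃ x1 ∈ filt k D Ml B r ⊓ par 1, x = x0 + x1) ∧
      (2 ≤ r → filt k D Ml B r ≤
        hSpan k D (genSet k D Ml B par r 0) ⊔ hSpan k D (genSet k D Ml B par r 1)) := by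
    intro r
    induction r with
    | zero =>
      constructor
      · intro x hx
        rw [filt_zero, Submodule.mem_bot] at hx
        exact ⟨0, zero_mem _, 0, zero_mem _, by rw [hx, add_zero]⟩
      · intro h; exact absurd h (by omega)
    | succ q ih =>
      have part2 : 2 ≤ q + 1 → filt k D Ml B (q + 1) ≤
          hSpan k D (genSet k D Ml B par (q + 1) 0)
            ⊔ hSpan k D (genSet k D Ml B par (q + 1) 1) := by
        intro hq2
        obtain ⟨q', rfl⟩ : ∃ q', q = q' + 1 := ⟨q - 1, by omega⟩
        rw [show q' + 1 + 1 = q' + 2 from rfl, filt_add_two]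
        apply hSpan_le
        · rintro x ⟨c, hcB, u, hu, t, rfl⟩
          obtain ⟨c0, hc0, c1, hc1, rfl⟩ := hBgr c hcB
          obtain ⟨u0, hu0, u1, hu1, rfl⟩ := (ih.1) u hu
          have expand : Ml (c0 + c1) (u0 + u1) t
              = Ml c0 u0 t + Ml c0 u1 t + Ml c1 u0 t + Ml c1 u1 t := by
            simp only [map_add, LinearMap.add_apply, Finsupp.add_apply]
            abel
          rw [SetLike.mem_coe, expand]
          have hmk : ∀ (α β : ZMod 2) (cc uu : A), cc ∈ B ⊓ par α →
              uu ∈ filt k D Ml B (q' + 1) ⊓ par β →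
              Ml cc uu t ∈ hSpan k D (genSet k D Ml B par (q' + 2) (α + β)) := by
            intro α β cc uu hcc huu
            refine mem_hSpan_self k ⟨α, β, rfl, cc, hcc, uu, ?_, t, rfl⟩
            rwa [show q' + 2 - 1 = q' + 1 from rfl]
          have m00 := hmk 0 0 c0 u0 hc0 hu0
          have m01 := hmk 0 1 c0 u1 hc0 hu1
          have m10 := hmk 1 0 c1 u0 hc1 hu0
          have m11 := hmk 1 1 c1 u1 hc1 hu1
          rw [show ((0 : ZMod 2) + 0) = 0 by decide] at m00
          rw [show ((0 : ZMod 2) + 1) = 1 by decide] at m01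
          rw [show ((1 : ZMod 2) + 0) = 1 by decide] at m10
          rw [show ((1 : ZMod 2) + 1) = 0 by decide] at m11
          exact add_mem (add_mem (add_mem (Submodule.mem_sup_left m00)
            (Submodule.mem_sup_right m01)) (Submodule.mem_sup_right m10))
            (Submodule.mem_sup_left m11)
        · intro x hx
          obtain ⟨y, hy, z, hz, rfl⟩ := Submodule.mem_sup.1 hx
          rw [map_add]
          exact Submodule.add_mem _ (Submodule.mem_sup_left (hSpan_D k y hy))
            (Submodule.mem_sup_right (hSpan_D k z hz))
      refine ⟨?_, part2⟩
      rcases Nat.eq_zero_or_pos q with rfl | hq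
      · intro x hx
        obtain ⟨a0, h0, a1, h1, rfl⟩ := hBgr x hx
        exact ⟨a0, h0, a1, h1, rfl⟩
      · intro x hx
        obtain ⟨w0, hw0, w1, hw1, rfl⟩ := Submodule.mem_sup.1 (part2 (by omega) hx)
        exact ⟨w0, hWj (q + 1) (by omega) 0 hw0, w1, hWj (q + 1) (by omega) 1 hw1, rfl⟩
  have hpar01 : ∀ z : ZMod 2, z = 0 ∨ z = 1 := by decide
  have hhom : ∀ r, 2 ≤ r → ∀ (j : ZMod 2), ∀ c ∈ filt k D Ml B r, c ∈ par j →
      c ∈ hSpan k D (genSet k D Ml B par r j) := by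
    intro r hr j c hc hcj
    obtain ⟨w0, hw0, w1, hw1, he⟩ := Submodule.mem_sup.1 ((hGS r).2 hr hc)
    have hp0 : w0 ∈ par 0 := ((hWj r hr 0 hw0).2 : _)
    have hp1 : w1 ∈ par 1 := ((hWj r hr 1 hw1).2 : _)
    rcases hpar01 j with rfl | rfl
    · have : w1 ∈ par 0 ⊓ par 1 := by
        refine Submodule.mem_inf.2 ⟨?_, hp1⟩
        have : w1 = c - w0 := by rw [← he]; abel
        rw [this]
        exact sub_mem hcj hp0
      rw [hgr.inf_eq_bot, Submodule.mem_bot] at this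
      rw [← he, this, add_zero] at *
      exact hw0
    · have : w0 ∈ par 0 ⊓ par 1 := by
        refine Submodule.mem_inf.2 ⟨hp0, ?_⟩
        have : w0 = c - w1 := by rw [← he]; abel
        rw [this]
        exact sub_mem hcj hp1
      rw [hgr.inf_eq_bot, Submodule.mem_bot] at this
      rw [← he, this, zero_add] at *
      exact hw1
  -- part (2): the filtration is compatible with the commutator bracket
  have hbrkmain : ∀ T n' m', n' + m' ≤ T → 1 ≤ n' → 1 ≤ m' →
      ∀ (i j : ZMod 2), ∀ a, a ∈ filt k D Ml B n' → a ∈ par i →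
      ∀ c, c ∈ filt k D Ml B m' → c ∈ par j →
      brk k D Ml (sgn i j) a c ∈ coeffSub k (filt k D Ml B (n' + m' - 1)) := by
    intro T
    induction T with
    | zero => intro n' m' h h1 h2; exact absurd h (by omega)
    | succ T ihT =>
      have step : ∀ n₀ m₀, n₀ + m₀ = T + 1 → 1 ≤ n₀ → 2 ≤ m₀ →
          ∀ (i j : ZMod 2), ∀ a, a ∈ filt k D Ml B n₀ → a ∈ par i →
          ∀ c, c ∈ filt k D Ml B m₀ → c ∈ par j →
          brk k D Ml (sgn i j) a c ∈ coeffSub k (filt k D Ml B (n₀ + m₀ - 1)) := by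
        intro n₀ m₀ he hn₀ hm₀ i j a haf hap c hcf hcp
        have hle : hSpan k D (genSet k D Ml B par m₀ j) ≤
            Submodule.comap (brk k D Ml (sgn i j) a)
              (coeffSub k (filt k D Ml B (n₀ + m₀ - 1))) := by
          apply hSpan_le
          · rintro x ⟨j1, j2, hj, c', hc', u, hu, t, rfl⟩
            rw [SetLike.mem_coe, Submodule.mem_comap]
            have hu1 : u ∈ filt k D Ml B (m₀ - 1) := hu.1
            have hbrk1 : brk k D Ml (sgn i j1) a c' ∈ coeffSub k (filt k D Ml B n₀) := by
              have h1 := ihT n₀ 1 (by omega) hn₀ le_rfl i j1 a haf hap c' hc'.1 hc'.2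
              rwa [show n₀ + 1 - 1 = n₀ by omega] at h1
            have hbrk2 : brk k D Ml (sgn i j2) a u
                ∈ coeffSub k (filt k D Ml B (n₀ + (m₀ - 1) - 1)) :=
              ihT n₀ (m₀ - 1) (by omega) hn₀ (by omega) i j2 a haf hap u hu1 hu.2
            have hT1 : cw k (Ml.flip u) (brk k D Ml (sgn i j1) a c')
                ∈ coeffSub k (coeffSub k (filt k D Ml B (n₀ + m₀ - 1))) := by
              refine (mem_coeffSub k).2 fun p => ?_
              rw [cw_apply, LinearMap.flip_apply]
              have h2 := hprod n₀ hn₀ (m₀ - 1) (by omega) _ (coeff_apply k hbrk1 p) u hu1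
              rwa [show n₀ + (m₀ - 1) = n₀ + m₀ - 1 by omega] at h2
            have hT2 : cw k (Ml c') (brk k D Ml (sgn i j2) a u)
                ∈ coeffSub k (coeffSub k (filt k D Ml B (n₀ + m₀ - 1))) := by
              refine (mem_coeffSub k).2 fun p => (mem_coeffSub k).2 fun t'' => ?_
              rw [cw_apply]
              have h3 := hgen (n₀ + (m₀ - 1) - 1) (by omega) c' hc'.1 _
                (coeff_apply k hbrk2 p) t''
              rwa [show n₀ + (m₀ - 1) - 1 + 1 = n₀ + m₀ - 1 by omega] at h3
            have hI := leibnizI k D Ml hsesq.dleft hsesq.dright hassoc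
              (sgn i j1) (sgn i j2) a c' u
            have hsgn : sgn i j = sgn i j1 * sgn i j2 := by
              rw [← hj]; exact sgn_mul i j1 j2
            have hmem : cw k (brk k D Ml (sgn i j) a) (Ml c' u)
                ∈ coeffSub k (coeffSub k (filt k D Ml B (n₀ + m₀ - 1))) := by
              rw [hsgn, hI]
              exact add_mem (coeff_opS k hT1)
                (zsmul_mem' k _ (sgn i j1) (coeff_swap k hT2))
            refine (mem_coeffSub k).2 fun t' => ?_
            have e : brk k D Ml (sgn i j) a (Ml c' u t)
                = (cw k (brk k D Ml (sgn i j) a) (Ml c' u)) t := by rw [cw_apply]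
            rw [e]
            exact coeff_apply k (coeff_apply k hmem t) t'
          · intro y hy
            rw [Submodule.mem_comap] at hy ⊢
            rw [brk_Dright k D Ml hsesq.dleft hsesq.dright]
            exact add_mem (coeff_cw k D (hDf _) hy) (coeff_lamMul k hy)
        have h7 := hle (hhom m₀ hm₀ j c hcf hcp)
        rwa [Submodule.mem_comap] at h7
      intro n' m' hlest hn' hm'
      by_cases hsm : n' + m' ≤ T
      · exact ihT n' m' hsm hn' hm'
      · have heq : n' + m' = T + 1 := by omega
        rcases Nat.lt_or_ge m' 2 with hm2 | hm2
        · have hm1 : m' = 1 := by omega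
          subst hm1
          rcases Nat.lt_or_ge n' 2 with hn2 | hn2
          · have hn1 : n' = 1 := by omega
            subst hn1
            intro i j a haf hap c hcf hcp
            refine (mem_coeffSub k).2 fun t => ?_
            have h8 := hBcl i j a (Submodule.mem_inf.2 ⟨haf, hap⟩) c
              (Submodule.mem_inf.2 ⟨hcf, hcp⟩) t
            rw [brk_apply]
            exact h8
          · intro i j a haf hap c hcf hcp
            have inner := step 1 n' (by omega) le_rfl hn2 j i c hcf hcp a haf hap
            rw [show 1 + n' - 1 = n' by omega] at inner
            have hskew := brk_skew k D Ml (sgn_sq i j) a c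
            rw [show n' + 1 - 1 = n' by omega, hskew, sgn_comm i j]
            exact neg_mem (zsmul_mem' k _ (sgn j i)
              (coeff_substNeg k D (hDf n') inner))
        · exact step n' m' heq hn' hm2
  intro n m hn hm
  refine ⟨?_, ?_⟩
  · intro a ha b hb t
    exact coeff_apply k (hprod n hn m hm a ha b hb) t
  · intro i j a ha b hb t
    rw [Submodule.mem_inf] at ha hb
    have h9 := hbrkmain (n + m) n m le_rfl hn hm i j a ha.1 ha.2 b hb.1 hb.2
    rw [← brk_apply k D Ml (sgn i j) a b]
    exact coeff_apply k h9 t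
end
end

section
/- Let p be a Poisson superalgebra with even derivation d carrying in addition a ℤ-grading p = ⊕_{n∈ℤ} p_n (compatible with the ℤ₂-grading) such that p_n p_m ⊆ p_{n+m}, {p_n, p_m} ⊆ p_{n+m+1}, and d(p_n) ⊆ p_{n+1}. For a ∈ p_{−1} and u ∈ p_n, the element ρ̂_λ(a, u) = {a, u} + ∂ d(a)u + λ(d(au) + au) of (H ⊗ p)[λ] has all coefficients in H ⊗ (p_n ⊕ p_{n−1}); consequently, for every m ∈ ℤ, the H-submodule M_{≤m} = H ⊗ (⊕_{n≤m} p_n) of L(p, d) is invariant under ρ̂_λ(a, ·) for every a ∈ p_{−1}. -/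
open Finsupp

noncomputable section

variable (k : Type) [Field k] [CharZero k]

section Aux

variable {M : Type} [AddCommGroup M] [Module k M]

/-- Coefficientwise double lift of a submodule to `M[λ] ⊗ H`-like doubles. -/
def dlift (S : Submodule k M) : Submodule k (ℕ →₀ (ℕ →₀ M)) where
  carrier := { g | ∀ t j, g t j ∈ S }
  add_mem' := fun hf hg t j => by
    simpa only [Finsupp.add_apply] using add_mem (hf t j) (hg t j)
  zero_mem' := fun t j => by simp
  smul_mem' := fun c f hf t j => by
    simpa only [Finsupp.smul_apply] using Submodule.smul_mem _ c (hf t j)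

lemma mem_dlift {S : Submodule k M} {g : ℕ →₀ (ℕ →₀ M)} :
    g ∈ dlift k S ↔ ∀ t j, g t j ∈ S := Iff.rfl

lemma single_mem_dlift {S : Submodule k M} {x : M} (hx : x ∈ S) (t0 j0 : ℕ) :
    Finsupp.single t0 (Finsupp.single j0 x) ∈ dlift k S := by
  intro t j
  rcases eq_or_ne t0 t with rfl | h
  · rw [Finsupp.single_eq_same]
    rcases eq_or_ne j0 j with rfl | h2
    · rw [Finsupp.single_eq_same]; exact hx
    · rw [Finsupp.single_eq_of_ne' h2]; exact S.zero_mem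
  · rw [Finsupp.single_eq_of_ne' h]; simp

lemma lamMul_mem_dlift {S : Submodule k M} {g : ℕ →₀ (ℕ →₀ M)} (hg : g ∈ dlift k S) :
    lamMul k g ∈ dlift k S := by
  intro t j
  rw [lamMul, Finsupp.lmapDomain_apply]
  cases t with
  | zero =>
    rw [Finsupp.mapDomain_notin_range]
    · simp
    · rintro ⟨a, ha⟩; exact Nat.succ_ne_zero a ha
  | succ t =>
    rw [show t + 1 = Nat.succ t from rfl, Finsupp.mapDomain_apply Nat.succ_injective]
    exact hg t j

lemma cwDD_mem_dlift {S : Submodule k M} {g : ℕ →₀ (ℕ →₀ M)} (hg : g ∈ dlift k S) :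
    cw k (DD k M) g ∈ dlift k S := by
  intro t j
  rw [cw, Finsupp.mapRange.linearMap_apply, Finsupp.mapRange_apply, DD,
    Finsupp.lmapDomain_apply]
  cases j with
  | zero =>
    rw [Finsupp.mapDomain_notin_range]
    · exact S.zero_mem
    · rintro ⟨a, ha⟩; exact Nat.succ_ne_zero a ha
  | succ j =>
    rw [show j + 1 = Nat.succ j from rfl, Finsupp.mapDomain_apply Nat.succ_injective]
    exact hg t j

lemma pow_mem_dlift {S : Submodule k M} (n : ℕ) {g : ℕ →₀ (ℕ →₀ M)} (hg : g ∈ dlift k S) :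
    (((cw k (DD k M) + lamMul k : (ℕ →₀ (ℕ →₀ M)) →ₗ[k] (ℕ →₀ (ℕ →₀ M))) ^ n)) g ∈ dlift k S := by
  induction n generalizing g with
  | zero => simpa using hg
  | succ n ih =>
    rw [pow_succ, Module.End.mul_apply]
    exact ih (by
      rw [LinearMap.add_apply]
      exact (dlift k S).add_mem (cwDD_mem_dlift k hg) (lamMul_mem_dlift k hg))

lemma extSesqui_single_zero {A B W : Type} [AddCommGroup A] [Module k A]
    [AddCommGroup B] [Module k B] [AddCommGroup W] [Module k W]
    (DW : W →ₗ[k] W) (F : A →ₗ[k] B →ₗ[k] (ℕ →₀ W)) (a : A) (j : ℕ) (b : B) :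
    extSesqui k DW F (Finsupp.single 0 a) (Finsupp.single j b)
      = (((cw k DW + lamMul k : (ℕ →₀ W) →ₗ[k] (ℕ →₀ W)) ^ j)) (F a b) := by
  rw [extSesqui, Finsupp.lsum_single, LinearMap.comp_apply]
  simp only [LinearEquiv.coe_coe]
  rw [Finsupp.lsum_single]
  simp [LinearMap.pi_apply, LinearMap.llcomp_apply, pow_zero, one_mul]

end Aux

/-- **Weight-filtration invariance of the twisted representation.**
Let `p` be a `ℤ`-graded Poisson superalgebra with even derivation `d` such that
`p_n p_m ⊆ p_{n+m}`, `{p_n, p_m} ⊆ p_{n+m+1}`, `d(p_n) ⊆ p_{n+1}`. For `a ∈ p_{-1}` and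
`u ∈ p_n`, all coefficients of `ρ̂_λ(a, u) = {a,u} + ∂ d(a)u + λ(d(au) + au)` lie in
`H ⊗ (p_n ⊕ p_{n-1})`; consequently each `M_{≤m} = H ⊗ (⊕_{n≤m} p_n)` is invariant
under `ρ̂_λ(a, ·)` for every `a ∈ p_{-1}`. -/
theorem twisted_representation_weight_filtration
    (p : Type) [NonUnitalRing p] [Module k p] [SMulCommClass k p p] [IsScalarTower k p p]
    (par : ZMod 2 → Submodule k p) (br : p →ₗ[k] p →ₗ[k] p) (d : p →ₗ[k] p)
    (hp : IsPoissonSuper k p par br) (hd : IsEvenDerivation k p par br d)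
    (gr : ℤ → Submodule k p)
    (hgr_top : ⨆ n, gr n = ⊤) (hgr_indep : iSupIndep gr)
    (hgr_compat : ∀ n : ℤ, gr n = (gr n ⊓ par 0) ⊔ (gr n ⊓ par 1))
    (hgr_mul : ∀ (n m : ℤ) (a b : p), a ∈ gr n → b ∈ gr m → a * b ∈ gr (n + m))
    (hgr_br : ∀ (n m : ℤ) (a b : p), a ∈ gr n → b ∈ gr m → br a b ∈ gr (n + m + 1))
    (hgr_d : ∀ (n : ℤ) (a : p), a ∈ gr n → d a ∈ gr (n + 1)) :
    (∀ (n : ℤ) (a u : p), a ∈ gr (-1) → u ∈ gr n →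
      ∀ t j, ((cst k (emb k p (br a u) + DD k p (emb k p (d a * u)))
          + lamMul k (cst k (emb k p (d (a * u) + a * u)))) t) j ∈ gr n ⊔ gr (n - 1)) ∧
    (∀ (m : ℤ) (a : p), a ∈ gr (-1) → ∀ f : ℕ →₀ p,
      (∀ j, f j ∈ ⨆ n : ℤ, ⨆ _ : n ≤ m, gr n) →
      ∀ t j, (LpdRho k p br d (emb k p a) f t) j ∈ ⨆ n : ℤ, ⨆ _ : n ≤ m, gr n) := by
  have key : ∀ (n : ℤ) (a u : p), a ∈ gr (-1) → u ∈ gr n →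
      br a u ∈ gr n ∧ d a * u ∈ gr n ∧ d (a * u) ∈ gr n ∧ a * u ∈ gr (n - 1) := by
    intro n a u ha hu
    have hau : a * u ∈ gr (n - 1) := by
      have := hgr_mul (-1) n a u ha hu
      rwa [show (-1 : ℤ) + n = n - 1 by ring] at this
    refine ⟨?_, ?_, ?_, hau⟩
    · have := hgr_br (-1) n a u ha hu
      rwa [show (-1 : ℤ) + n + 1 = n by ring] at this
    · have hda : d a ∈ gr 0 := by
        have := hgr_d (-1) a ha
        rwa [show (-1 : ℤ) + 1 = 0 by ring] at this
      have := hgr_mul 0 n (d a) u hda hu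
      rwa [zero_add] at this
    · have := hgr_d (n - 1) _ hau
      rwa [show n - 1 + 1 = n by ring] at this
  have e1 : ∀ x y : p, cst k (emb k p x + DD k p (emb k p y))
      = Finsupp.single 0 (Finsupp.single 0 x) + Finsupp.single 0 (Finsupp.single 1 y) := by
    intro x y
    simp [cst, emb, DD, Finsupp.lmapDomain_apply, Finsupp.mapDomain_single, Finsupp.single_add]
  have e2 : ∀ z : p, lamMul k (cst k (emb k p z))
      = Finsupp.single 1 (Finsupp.single 0 z) := by
    intro z
    simp [cst, emb, lamMul, Finsupp.lmapDomain_apply, Finsupp.mapDomain_single]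
  constructor
  · intro n a u ha hu t j
    obtain ⟨h1, h2, h3, h4⟩ := key n a u ha hu
    have hmem : (cst k (emb k p (br a u) + DD k p (emb k p (d a * u)))
        + lamMul k (cst k (emb k p (d (a * u) + a * u)))) ∈ dlift k (gr n ⊔ gr (n - 1)) := by
      rw [e1, e2]
      exact add_mem (add_mem (single_mem_dlift k (Submodule.mem_sup_left h1) 0 0)
        (single_mem_dlift k (Submodule.mem_sup_left h2) 0 1))
        (single_mem_dlift k (add_mem (Submodule.mem_sup_left h3)
          (Submodule.mem_sup_right h4)) 1 0)
    exact hmem t j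
  · intro m a ha f hf t j
    set S := (⨆ n : ℤ, ⨆ _ : n ≤ m, gr n) with hS
    have hin : ∀ n' : ℤ, n' ≤ m → ∀ y : p, y ∈ gr n' → y ∈ S := fun n' hn' y hy =>
      Submodule.mem_iSup_of_mem n' (Submodule.mem_iSup_of_mem hn' hy)
    have hsingle : ∀ (jj : ℕ) (x : p), x ∈ S →
        LpdRho k p br d (emb k p a) (Finsupp.single jj x) ∈ dlift k S := by
      intro jj x hx
      have hcomap : S ≤ Submodule.comap
          ((LpdRho k p br d (emb k p a)) ∘ₗ Finsupp.lsingle jj) (dlift k S) := by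
        refine iSup_le fun n => iSup_le fun hn => fun y hy => ?_
        obtain ⟨h1, h2, h3, h4⟩ := key n a y ha hy
        simp only [Submodule.mem_comap, LinearMap.comp_apply, Finsupp.lsingle_apply]
        have hemb : emb k p a = Finsupp.single 0 a := rfl
        rw [LpdRho, LinearMap.add_apply, LinearMap.add_apply, LinearMap.compr₂_apply,
          LpdBr, LpdMul, hemb, extSesqui_single_zero, extSesqui_single_zero]
        have hqua : qua0 k p br d a y ∈ dlift k S := by
          have eq : qua0 k p br d a y
              = (Finsupp.single 0 (Finsupp.single 0 (br a y))
                  + Finsupp.single 0 (Finsupp.single 1 (d a * y)))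
                + Finsupp.single 1 (Finsupp.single 0 (d (a * y))) := by
            rw [qua0, LinearMap.add_apply, LinearMap.add_apply,
              LinearMap.add_apply, LinearMap.add_apply]
            simp only [LinearMap.compr₂_apply, LinearMap.comp_apply, LinearMap.mul_apply']
            rw [← map_add (cst k) (emb k p (br a y)) (DD k p (emb k p (d a * y))),
              e1, e2]
          rw [eq]
          exact add_mem (add_mem
            (single_mem_dlift k (hin n hn _ h1) 0 0)
            (single_mem_dlift k (hin n hn _ h2) 0 1))
            (single_mem_dlift k (hin n hn _ h3) 1 0)
        have hcur : curMul0 k p a y ∈ dlift k S := by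
          have eq : curMul0 k p a y = Finsupp.single 0 (Finsupp.single 0 (a * y)) := by
            rw [curMul0, LinearMap.compr₂_apply, LinearMap.mul_apply']; rfl
          rw [eq]
          exact single_mem_dlift k (hin (n - 1) (by omega) _ h4) 0 0
        exact add_mem (pow_mem_dlift k jj hqua)
          (lamMul_mem_dlift k (pow_mem_dlift k jj hcur))
      have := hcomap hx
      simpa only [Submodule.mem_comap, LinearMap.comp_apply, Finsupp.lsingle_apply] using this
    have hmem : LpdRho k p br d (emb k p a) f ∈ dlift k S := by
      have hf' : LpdRho k p br d (emb k p a) f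
          = ∑ jj ∈ f.support, LpdRho k p br d (emb k p a) (Finsupp.single jj (f jj)) := by
        conv_lhs => rw [← Finsupp.sum_single f]
        rw [Finsupp.sum, map_sum]
      rw [hf']
      exact Submodule.sum_mem _ fun jj _ => hsingle jj (f jj) (hf jj)
    exact hmem t j
end
end

section
/- Let p be a Poisson superalgebra with even derivation d carrying in addition a ℤ-grading p = ⊕_{n∈ℤ} p_n (compatible with the ℤ₂-grading) such that p_n p_m ⊆ p_{n+m}, {p_n, p_m} ⊆ p_{n+m+1}, and d(p_n) ⊆ p_{n+1}. Set N = {u ∈ p₀ : au = 0 for all a ∈ p_{−1}}. Then for every a ∈ p_{−1} and u ∈ N, both {a, u} ∈ N and d(a)·u ∈ N. -/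
open Finsupp

noncomputable section

variable (k : Type) [Field k] [CharZero k]

lemma sgn_smul_zero {M : Type*} [AddCommGroup M] {i j : ZMod 2} {y : M}
    (h : sgn i j • y = 0) : y = 0 := by
  unfold sgn at h
  split at h
  · simpa using h
  · simpa using h

/-- **The annihilator `N` is invariant.** Let `p` be a `ℤ`-graded Poisson superalgebra with
even derivation `d` (gradings as in the weight filtration), and
`N = {u ∈ p₀ : p_{-1} u = 0}`. Then for every `a ∈ p_{-1}` and `u ∈ N`, both
`{a, u} ∈ N` and `d(a)·u ∈ N`. -/
theorem annihilator_invariance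
    (p : Type) [NonUnitalRing p] [Module k p] [SMulCommClass k p p] [IsScalarTower k p p]
    (par : ZMod 2 → Submodule k p) (br : p →ₗ[k] p →ₗ[k] p) (d : p →ₗ[k] p)
    (hp : IsPoissonSuper k p par br) (hd : IsEvenDerivation k p par br d)
    (gr : ℤ → Submodule k p)
    (hgr_top : ⨆ n, gr n = ⊤) (hgr_indep : iSupIndep gr)
    (hgr_compat : ∀ n : ℤ, gr n = (gr n ⊓ par 0) ⊔ (gr n ⊓ par 1))
    (hgr_mul : ∀ (n m : ℤ) (a b : p), a ∈ gr n → b ∈ gr m → a * b ∈ gr (n + m))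
    (hgr_br : ∀ (n m : ℤ) (a b : p), a ∈ gr n → b ∈ gr m → br a b ∈ gr (n + m + 1))
    (hgr_d : ∀ (n : ℤ) (a : p), a ∈ gr n → d a ∈ gr (n + 1)) :
    ∀ a ∈ gr (-1), ∀ u ∈ gr 0, (∀ x ∈ gr (-1), x * u = 0) →
      (br a u ∈ gr 0 ∧ ∀ x ∈ gr (-1), x * br a u = 0) ∧
      (d a * u ∈ gr 0 ∧ ∀ x ∈ gr (-1), x * (d a * u) = 0) := by
  intro a ha u hu hann
  have da0 : d a ∈ gr 0 := by
    have h := hgr_d (-1) a ha; norm_num at h; exact h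
  have key : ∀ b ∈ gr (-1), ∀ x ∈ gr (-1), x * br b u = 0 := by
    intro b hb x hx
    have hb' : b ∈ (gr (-1) ⊓ par 0) ⊔ (gr (-1) ⊓ par 1) := by
      rw [← hgr_compat]; exact hb
    have hx' : x ∈ (gr (-1) ⊓ par 0) ⊔ (gr (-1) ⊓ par 1) := by
      rw [← hgr_compat]; exact hx
    rcases Submodule.mem_sup.mp hb' with ⟨b0, hb0, b1, hb1, rfl⟩
    rcases Submodule.mem_sup.mp hx' with ⟨x0, hx0, x1, hx1, rfl⟩
    have main : ∀ (i j : ZMod 2) (bi xj : p), bi ∈ gr (-1) ⊓ par i →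
        xj ∈ gr (-1) ⊓ par j → xj * br bi u = 0 := by
      intro i j bi xj hbi hxj
      have h1 : xj * u = 0 := hann xj hxj.1
      have h2 : br bi xj ∈ gr (-1) := by
        have h := hgr_br (-1) (-1) bi xj hbi.1 hxj.1; norm_num at h; exact h
      have hleib := hp.leibniz i j bi xj u hbi.2 hxj.2
      rw [h1, (br bi).map_zero, hann _ h2, zero_add] at hleib
      exact sgn_smul_zero hleib.symm
    have e : (x0 + x1) * br (b0 + b1) u =
        x0 * br b0 u + x0 * br b1 u + (x1 * br b0 u + x1 * br b1 u) := by
      rw [map_add, LinearMap.add_apply, add_mul, mul_add, mul_add]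
    rw [e, main 0 0 b0 x0 hb0 hx0, main 0 1 b0 x1 hb0 hx1,
      main 1 0 b1 x0 hb1 hx0, main 1 1 b1 x1 hb1 hx1]
    simp
  refine ⟨⟨?_, key a ha⟩, ?_, ?_⟩
  · have h := hgr_br (-1) 0 a u ha hu; norm_num at h; exact h
  · have h := hgr_mul 0 0 (d a) u da0 hu; norm_num at h; exact h
  · intro x hx
    rw [← mul_assoc]
    refine hann _ ?_
    have h := hgr_mul (-1) 0 x (d a) hx da0; norm_num at h; exact h
end
end
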